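/- arXiv:2210.14095 — 3 statements merged into one kernel-verified Lean document; each statement's English description precedes it below -/
import Mathlib

section
/- Let x_1, x_2, …, x_M ∈ [0,1], and let g : [0,1] → ℝ be a function of bounded variation which vanishes outside an interval [c,d] ⊆ [0,1]. Then | (1/M) · Σ_{m=1}^M g(x_m) − ∫_0^1 g(x) dx | ≤ V(g;[0,1]) · sup_{I ⊆ [c,d]} | (1/M) · Σ_{m=1}^M 1_I(x_m) − λ(I) |, where the supremum is taken over all subintervals I of [c,d]. -/
open scoped BigOperators
open MeasureTheory

attribute [local instance] Classical.propDecidable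

noncomputable section

lemma evar_sum_pieces (g : ℝ → ℝ) (w : ℕ → ℝ) (N : ℕ) (hw : ∀ n, n < N → w n ≤ w (n+1)) :
    ∑ n ∈ Finset.range N, eVariationOn g (Set.Icc (w n) (w (n+1))) ≤
      eVariationOn g (Set.Icc (w 0) (w N)) := by
  induction N with
  | zero => simp
  | succ N ih =>
    have hwN : ∀ n, n < N → w n ≤ w (n+1) := fun n h => hw n (by omega)
    have chain : ∀ n, n ≤ N → w 0 ≤ w n := by
      intro n hn
      induction n with
      | zero => exact le_rfl
      | succ k ih2 => exact (ih2 (by omega)).trans (hw k (by omega))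
    have key := eVariationOn.Icc_add_Icc g (s := Set.univ) (chain N le_rfl)
      (hw N (by omega)) (Set.mem_univ (w N))
    simp only [Set.univ_inter] at key
    rw [Finset.sum_range_succ, ← key]
    exact add_le_add (ih hwN) le_rfl

lemma abs_le_max_of_mem {a b C t : ℝ} (h1 : a ≤ t) (h2 : t ≤ b) :
    |C - t| ≤ max |C - a| |C - b| := by
  rcases le_total C t with h | h
  · refine le_trans ?_ (le_max_right _ _)
    rw [abs_of_nonpos (by linarith), abs_of_nonpos (by linarith)]
    linarith
  · refine le_trans ?_ (le_max_left _ _)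
    rw [abs_of_nonneg (by linarith), abs_of_nonneg (by linarith)]
    linarith

lemma RS_bound (g : ℝ → ℝ) (a b C : ℝ) (hab : a ≤ b)
    (hfin : eVariationOn g (Set.Icc a b) ≠ ⊤)
    (hInt : ∀ u v : ℝ, a ≤ u → u ≤ v → v ≤ b → IntervalIntegrable g volume u v) :
    |(C - b) * g b - (C - a) * g a + ∫ t in a..b, g t| ≤
      (max |C - a| |C - b|) * (eVariationOn g (Set.Icc a b)).toReal := by
  set V : ℝ := (eVariationOn g (Set.Icc a b)).toReal with hV
  set K : ℝ := max |C - a| |C - b| with hK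
  have hV0 : 0 ≤ V := ENNReal.toReal_nonneg
  apply le_of_forall_pos_le_add
  intro ε hε
  obtain ⟨k0, hk0⟩ := exists_nat_gt ((b - a) * V / ε)
  set k : ℕ := k0 + 1 with hkdef
  have hkpos : 0 < (k : ℝ) := by positivity
  have hkbig : (b - a) * V < k * ε := by
    have : (b - a) * V / ε < k := lt_of_lt_of_le hk0 (by exact_mod_cast Nat.le_succ k0)
    calc (b - a) * V = ((b - a) * V / ε) * ε := by field_simp
    _ < k * ε := by apply mul_lt_mul_of_pos_right this hε
  set δ : ℝ := (b - a) / k with hδ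
  have hδ0 : 0 ≤ δ := div_nonneg (by linarith) hkpos.le
  have hkδ : (k : ℝ) * δ = b - a := by rw [hδ]; field_simp
  set t : ℕ → ℝ := fun i => a + (min i k : ℕ) * δ with ht
  have htmono : Monotone t := by
    intro i j hij
    have : (min i k : ℕ) ≤ (min j k : ℕ) := by omega
    have : ((min i k : ℕ) : ℝ) ≤ ((min j k : ℕ) : ℝ) := by exact_mod_cast this
    simp only [ht]
    nlinarith
  have htval : ∀ i, i ≤ k → t i = a + i * δ := by
    intro i hi; simp only [ht, min_eq_left hi]
  have ht0 : t 0 = a := by simp [ht]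
  have htk : t k = b := by
    rw [htval k le_rfl, hδ]; field_simp; ring
  have htmem : ∀ i, t i ∈ Set.Icc a b := by
    intro i
    constructor
    · simp only [ht]
      have h0 : (0:ℝ) ≤ ((min i k : ℕ) : ℝ) := Nat.cast_nonneg _
      nlinarith
    · simp only [ht]
      have h1 : ((min i k : ℕ) : ℝ) ≤ (k : ℝ) := Nat.cast_le.mpr (Nat.min_le_right i k)
      nlinarith
  have hsucc : ∀ i, i < k → t (i + 1) = t i + δ := by
    intro i hi
    rw [htval i (by omega), htval (i+1) (by omega)]
    push_cast; ring
  -- integrability on pieces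
  have hpint : ∀ i, i < k → IntervalIntegrable g volume (t i) (t (i+1)) := by
    intro i hi
    exact hInt _ _ (htmem i).1 (htmono (by omega)) (htmem (i+1)).2
  -- decomposition
  have e1 : (C - b) * g b - (C - a) * g a =
      ∑ i ∈ Finset.range k, ((C - t (i+1)) * g (t (i+1)) - (C - t i) * g (t i)) := by
    rw [Finset.sum_range_sub (fun i => (C - t i) * g (t i)) k, ht0, htk]
  have e2 : (∫ s in a..b, g s) = ∑ i ∈ Finset.range k, ∫ s in t i..t (i+1), g s := by
    rw [intervalIntegral.sum_integral_adjacent_intervals hpint, ht0, htk]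
  have main : (C - b) * g b - (C - a) * g a + ∫ s in a..b, g s =
      ∑ i ∈ Finset.range k,
        ((C - t i) * (g (t (i+1)) - g (t i)) +
          ((∫ s in t i..t (i+1), g s) - g (t (i+1)) * (t (i+1) - t i))) := by
    rw [e1, e2, ← Finset.sum_add_distrib]
    apply Finset.sum_congr rfl
    intro i _
    ring
  rw [main]
  -- bound each part
  have hterm1 : ∀ i ∈ Finset.range k, |(C - t i) * (g (t (i+1)) - g (t i))| ≤
      K * |g (t (i+1)) - g (t i)| := by
    intro i _
    rw [abs_mul]
    apply mul_le_mul_of_nonneg_right _ (abs_nonneg _)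
    exact abs_le_max_of_mem (htmem i).1 (htmem i).2
  have hsumdg : ∑ i ∈ Finset.range k, |g (t (i+1)) - g (t i)| ≤ V := by
    have h1 := eVariationOn.sum_le (f := g) (n := k) htmono (fun i => htmem i)
    have h2 : ∀ i ∈ Finset.range k, edist (g (t (i+1))) (g (t i)) ≠ ⊤ :=
      fun i _ => edist_ne_top _ _
    calc ∑ i ∈ Finset.range k, |g (t (i+1)) - g (t i)|
        = ∑ i ∈ Finset.range k, (edist (g (t (i+1))) (g (t i))).toReal := by
          apply Finset.sum_congr rfl; intro i _
          rw [← dist_edist, Real.dist_eq]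
      _ = (∑ i ∈ Finset.range k, edist (g (t (i+1))) (g (t i))).toReal :=
          (ENNReal.toReal_sum h2).symm
      _ ≤ V := ENNReal.toReal_mono hfin h1
  have hterm2 : ∀ i ∈ Finset.range k,
      |(∫ s in t i..t (i+1), g s) - g (t (i+1)) * (t (i+1) - t i)| ≤
        (eVariationOn g (Set.Icc (t i) (t (i+1)))).toReal * δ := by
    intro i hi
    have hik : i < k := Finset.mem_range.mp hi
    have hfin_i : eVariationOn g (Set.Icc (t i) (t (i+1))) ≠ ⊤ := by
      intro htop
      apply hfin
      have := eVariationOn.mono g (Set.Icc_subset_Icc (htmem i).1 (htmem (i+1)).2)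
      rw [htop] at this
      exact top_le_iff.mp this
    have heq : (∫ s in t i..t (i+1), g s) - g (t (i+1)) * (t (i+1) - t i) =
        ∫ s in t i..t (i+1), (g s - g (t (i+1))) := by
      rw [intervalIntegral.integral_sub (hpint i hik) (intervalIntegrable_const)]
      rw [intervalIntegral.integral_const, smul_eq_mul]
      ring
    rw [heq]
    have hb1 : ∀ s ∈ Set.uIoc (t i) (t (i+1)), ‖g s - g (t (i+1))‖ ≤
        (eVariationOn g (Set.Icc (t i) (t (i+1)))).toReal := by
      intro s hs
      have hle : t i ≤ t (i+1) := htmono (by omega)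
      rw [Set.uIoc_of_le hle] at hs
      have hs' : s ∈ Set.Icc (t i) (t (i+1)) := ⟨le_of_lt hs.1, hs.2⟩
      have := eVariationOn.edist_le g hs' (Set.right_mem_Icc.mpr hle)
      have h3 : dist (g s) (g (t (i+1))) ≤ (eVariationOn g (Set.Icc (t i) (t (i+1)))).toReal :=
        by rw [dist_edist]; exact ENNReal.toReal_mono hfin_i this
      rw [Real.dist_eq] at h3
      exact h3
    have := intervalIntegral.norm_integral_le_of_norm_le_const hb1
    rw [Real.norm_eq_abs] at this
    have habs : |t (i+1) - t i| = δ := by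
      rw [hsucc i hik]; simp [abs_of_nonneg hδ0]
    rw [habs] at this
    exact this
  have hsumvar : ∑ i ∈ Finset.range k, (eVariationOn g (Set.Icc (t i) (t (i+1)))).toReal ≤ V := by
    have h1 := evar_sum_pieces g t k (fun n hn => htmono (by omega))
    rw [ht0, htk] at h1
    have h2 : ∀ i ∈ Finset.range k, eVariationOn g (Set.Icc (t i) (t (i+1))) ≠ ⊤ := by
      intro i _
      intro htop
      apply hfin
      have := eVariationOn.mono g (Set.Icc_subset_Icc (htmem i).1 (htmem (i+1)).2)
      rw [htop] at this
      exact top_le_iff.mp this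
    calc ∑ i ∈ Finset.range k, (eVariationOn g (Set.Icc (t i) (t (i+1)))).toReal
        = (∑ i ∈ Finset.range k, eVariationOn g (Set.Icc (t i) (t (i+1)))).toReal :=
          (ENNReal.toReal_sum h2).symm
      _ ≤ V := ENNReal.toReal_mono hfin h1
  calc |∑ i ∈ Finset.range k,
        ((C - t i) * (g (t (i+1)) - g (t i)) +
          ((∫ s in t i..t (i+1), g s) - g (t (i+1)) * (t (i+1) - t i)))|
      ≤ ∑ i ∈ Finset.range k,
        |((C - t i) * (g (t (i+1)) - g (t i)) +
          ((∫ s in t i..t (i+1), g s) - g (t (i+1)) * (t (i+1) - t i)))| :=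
        Finset.abs_sum_le_sum_abs _ _
    _ ≤ ∑ i ∈ Finset.range k,
        (K * |g (t (i+1)) - g (t i)| +
          (eVariationOn g (Set.Icc (t i) (t (i+1)))).toReal * δ) := by
        apply Finset.sum_le_sum
        intro i hi
        exact le_trans (abs_add_le _ _) (add_le_add (hterm1 i hi) (hterm2 i hi))
    _ = K * (∑ i ∈ Finset.range k, |g (t (i+1)) - g (t i)|) +
        (∑ i ∈ Finset.range k, (eVariationOn g (Set.Icc (t i) (t (i+1)))).toReal) * δ := by
        rw [Finset.sum_add_distrib, Finset.mul_sum, Finset.sum_mul]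
    _ ≤ K * V + V * δ := by
        have hK0 : 0 ≤ K := le_trans (abs_nonneg _) (le_max_left _ _)
        exact add_le_add (mul_le_mul_of_nonneg_left hsumdg hK0)
          (mul_le_mul_of_nonneg_right hsumvar hδ0)
    _ ≤ K * V + ε := by
        have hVδ : V * δ = (b - a) * V / k := by rw [hδ]; ring
        have : V * δ ≤ ε := by
          rw [hVδ, div_le_iff₀ hkpos]
          nlinarith
        linarith

lemma telescope_id (g : ℝ → ℝ) (w : ℕ → ℝ) (N : ℕ) (C0 dM : ℝ)
    (hInt : ∀ n, n < N + 1 → IntervalIntegrable g volume (w n) (w (n+1))) :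
    ∑ n ∈ Finset.range (N+1),
      ((C0 + n * dM - w (n+1)) * g (w (n+1)) - (C0 + n * dM - w n) * g (w n)
        + ∫ s in w n..w (n+1), g s)
    = (∫ s in (w 0)..(w (N+1)), g s)
      + (C0 + (N+1) * dM - w (N+1)) * g (w (N+1)) - (C0 - w 0) * g (w 0)
      - dM * ∑ n ∈ Finset.range (N+1), g (w (n+1)) := by
  set F : ℕ → ℝ := fun n => (C0 + n * dM - w n) * g (w n) with hF
  have key : ∀ n ∈ Finset.range (N+1),
      (C0 + n * dM - w (n+1)) * g (w (n+1)) - (C0 + n * dM - w n) * g (w n)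
        + ∫ s in w n..w (n+1), g s
      = ((F (n+1) - F n) - dM * g (w (n+1))) + ∫ s in w n..w (n+1), g s := by
    intro n _
    simp only [hF]
    push_cast
    ring
  rw [Finset.sum_congr rfl key, Finset.sum_add_distrib, Finset.sum_sub_distrib,
    Finset.sum_range_sub F, ← Finset.mul_sum,
    intervalIntegral.sum_integral_adjacent_intervals hInt]
  simp only [hF]
  push_cast
  ring

lemma card_filter_le {M : ℕ} (P : Fin M → Prop) (lo hi : ℕ)
    (h : ∀ j : Fin M, P j → lo ≤ (j : ℕ) ∧ (j : ℕ) < hi) :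
    (Finset.univ.filter P).card ≤ hi - lo := by
  have h1 : (Finset.univ.filter P).card ≤ (Finset.Ico lo hi).card := by
    apply Finset.card_le_card_of_injOn Fin.val
    · intro j hj
      rw [Finset.mem_coe, Finset.mem_Ico]
      exact h j (by simpa using hj)
    · intro j _ j' _ hjj
      exact Fin.ext hjj
  simpa [Nat.card_Ico] using h1

lemma card_filter_ge {M : ℕ} (hM : 1 ≤ M) (P : Fin M → Prop) (lo hi : ℕ) (hhi : hi ≤ M)
    (h : ∀ j : Fin M, lo ≤ (j : ℕ) → (j : ℕ) < hi → P j) :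
    hi - lo ≤ (Finset.univ.filter P).card := by
  have h1 : (Finset.Ico lo hi).card ≤ (Finset.univ.filter P).card := by
    apply Finset.card_le_card_of_injOn (fun i : ℕ => (⟨min i (M-1), by omega⟩ : Fin M))
    · intro i hi2
      rw [Finset.mem_coe, Finset.mem_Ico] at hi2
      have hv : min i (M-1) = i := by omega
      simp only [Finset.mem_coe, Finset.mem_filter, Finset.mem_univ, true_and]
      apply h
      · simp [hv]; omega
      · simp [hv]; omega
    · intro i hi2 i' hi2' hii
      rw [Finset.mem_coe, Finset.mem_Ico] at hi2 hi2'
      have := Fin.mk.injEq .. ▸ hii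
      simp only [Fin.mk.injEq] at hii
      omega
  simpa [Nat.card_Ico] using h1

set_option maxHeartbeats 1000000 in
theorem stmt9 (M : ℕ) (hM : 1 ≤ M) (x : Fin M → ℝ)
    (hx : ∀ m, x m ∈ Set.Icc (0 : ℝ) 1)
    (g : ℝ → ℝ) (c d : ℝ) (hc : 0 ≤ c) (hcd : c ≤ d) (hd : d ≤ 1)
    (hbv : BoundedVariationOn g (Set.Icc 0 1))
    (hvanish : ∀ y, y ∉ Set.Icc c d → g y = 0)
    (D : ℝ)
    (hD : ∀ I : Set ℝ, I.OrdConnected → I ⊆ Set.Icc c d →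
      |(1 / (M : ℝ)) * (∑ m, if x m ∈ I then (1 : ℝ) else 0) - (volume I).toReal| ≤ D) :
    |(1 / (M : ℝ)) * (∑ m, g (x m)) - ∫ y in (0 : ℝ)..1, g y| ≤
      (eVariationOn g (Set.Icc 0 1)).toReal * D := by
  have hMR : (0:ℝ) < M := by exact_mod_cast hM
  have hMne : (M:ℝ) ≠ 0 := ne_of_gt hMR
  -- D nonneg
  have hD0 : 0 ≤ D := by
    have := hD ∅ Set.ordConnected_empty (Set.empty_subset _)
    simpa using this
  -- sorted version of x
  set σ : Equiv.Perm (Fin M) := Tuple.sort x with hσ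
  set y : Fin M → ℝ := x ∘ σ with hy
  have hymono : Monotone y := Tuple.monotone_sort x
  have hy01 : ∀ j, y j ∈ Set.Icc (0:ℝ) 1 := fun j => hx (σ j)
  -- counting
  obtain ⟨cnt, hcnt_eq⟩ : ∃ f : Set ℝ → ℕ,
      ∀ I : Set ℝ, f I = (Finset.univ.filter (fun j : Fin M => y j ∈ I)).card :=
    ⟨_, fun I => rfl⟩
  have hsum_eq : ∀ I : Set ℝ, (∑ m, if x m ∈ I then (1:ℝ) else 0) = (cnt I : ℝ) := by
    intro I
    have h1 : (∑ j, if x (σ j) ∈ I then (1:ℝ) else 0) = ∑ m, if x m ∈ I then (1:ℝ) else 0 :=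
      Equiv.sum_comp σ (fun m => if x m ∈ I then (1:ℝ) else 0)
    rw [← h1, Finset.sum_boole, hcnt_eq]
    simp only [hy, Function.comp]
  have hD' : ∀ I : Set ℝ, I.OrdConnected → I ⊆ Set.Icc c d →
      |(cnt I : ℝ)/M - (volume I).toReal| ≤ D := by
    intro I h1 h2
    have h3 := hD I h1 h2
    rw [hsum_eq I] at h3
    have : (1/(M:ℝ)) * (cnt I : ℝ) = (cnt I : ℝ)/M := by ring
    rwa [this] at h3
  have hDk : ∀ I₁ I₂ : Set ℝ, I₁.OrdConnected → I₂.OrdConnected →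
      I₁ ⊆ Set.Icc c d → I₂ ⊆ Set.Icc c d → ∀ (k : ℕ) (ℓ : ℝ),
      (volume I₁).toReal = ℓ → (volume I₂).toReal = ℓ →
      cnt I₁ ≤ k → k ≤ cnt I₂ → |(k:ℝ)/M - ℓ| ≤ D := by
    intro I₁ I₂ ho1 ho2 hs1 hs2 k ℓ hv1 hv2 hk1 hk2
    have h1 := hD' I₁ ho1 hs1
    have h2 := hD' I₂ ho2 hs2
    rw [hv1, abs_le] at h1
    rw [hv2, abs_le] at h2
    rw [abs_le]
    have hc1 : ((cnt I₁ : ℕ):ℝ) ≤ (k:ℝ) := Nat.cast_le.mpr hk1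
    have hc2 : (k:ℝ) ≤ ((cnt I₂ : ℕ):ℝ) := Nat.cast_le.mpr hk2
    constructor
    · have hq : ((cnt I₁ : ℕ):ℝ)/M ≤ (k:ℝ)/M := by gcongr
      linarith [h1.1]
    · have hq : (k:ℝ)/M ≤ ((cnt I₂ : ℕ):ℝ)/M := by gcongr
      linarith [h2.2]
  -- boundary counts
  obtain ⟨a0, ha0eq⟩ : ∃ n : ℕ,
      n = (Finset.univ.filter (fun j : Fin M => y j ∈ Set.Iio c)).card := ⟨_, rfl⟩
  obtain ⟨b0, hb0eq⟩ : ∃ n : ℕ,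
      n = (Finset.univ.filter (fun j : Fin M => y j ∈ Set.Ioi d)).card := ⟨_, rfl⟩
  have ha0cnt : cnt (Set.Iio c) = a0 := by rw [hcnt_eq, ha0eq]; congr
  have hb0cnt : cnt (Set.Ioi d) = b0 := by rw [hcnt_eq, hb0eq]; congr
  have ha0M : a0 ≤ M := by
    rw [ha0eq]
    exact le_trans (Finset.card_filter_le _ _) (by simp)
  have hb0M : b0 ≤ M := by
    rw [hb0eq]
    exact le_trans (Finset.card_filter_le _ _) (by simp)
  have hlo1 : ∀ j : Fin M, (j:ℕ) < a0 → y j < c := by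
    intro j hj
    by_contra hyc
    push_neg at hyc
    have h1 : ∀ i : Fin M, y i ∈ Set.Iio c → 0 ≤ (i:ℕ) ∧ (i:ℕ) < (j:ℕ) := by
      intro i hi
      refine ⟨Nat.zero_le _, ?_⟩
      by_contra h
      push_neg at h
      have : y j ≤ y i := hymono (by rwa [Fin.le_def])
      simp only [Set.mem_Iio] at hi
      linarith
    have := card_filter_le (fun i : Fin M => y i ∈ Set.Iio c) 0 (j:ℕ) h1
    have := hcnt_eq (Set.Iio c)
    omega
  have hlo2 : ∀ j : Fin M, y j < c → (j:ℕ) < a0 := by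
    intro j hj
    have h1 : ∀ i : Fin M, 0 ≤ (i:ℕ) → (i:ℕ) < (j:ℕ)+1 → y i ∈ Set.Iio c := by
      intro i _ hi
      have : y i ≤ y j := hymono (by rw [Fin.le_def]; omega)
      simp only [Set.mem_Iio]
      linarith
    have := card_filter_ge hM (fun i : Fin M => y i ∈ Set.Iio c) 0 ((j:ℕ)+1)
      (by have := j.isLt; omega) h1
    have := hcnt_eq (Set.Iio c)
    omega
  have hhi1 : ∀ j : Fin M, M - b0 ≤ (j:ℕ) → d < y j := by
    intro j hj
    by_contra hyd
    push_neg at hyd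
    have h1 : ∀ i : Fin M, y i ∈ Set.Ioi d → (j:ℕ)+1 ≤ (i:ℕ) ∧ (i:ℕ) < M := by
      intro i hi
      refine ⟨?_, i.isLt⟩
      simp only [Set.mem_Ioi] at hi
      by_contra h
      push_neg at h
      have : y i ≤ y j := hymono (by rw [Fin.le_def]; omega)
      linarith
    have := card_filter_le (fun i : Fin M => y i ∈ Set.Ioi d) ((j:ℕ)+1) M h1
    have := j.isLt
    have := hcnt_eq (Set.Ioi d)
    omega
  have hhi2 : ∀ j : Fin M, d < y j → M - b0 ≤ (j:ℕ) := by
    intro j hj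
    have h1 : ∀ i : Fin M, (j:ℕ) ≤ (i:ℕ) → (i:ℕ) < M → y i ∈ Set.Ioi d := by
      intro i hi _
      have : y j ≤ y i := hymono (by rwa [Fin.le_def])
      simp only [Set.mem_Ioi]
      linarith
    have := card_filter_ge hM (fun i : Fin M => y i ∈ Set.Ioi d) (j:ℕ) M le_rfl h1
    have := j.isLt
    have := hcnt_eq (Set.Ioi d)
    omega
  have ha0b0 : a0 ≤ M - b0 := by
    by_contra h
    push_neg at h
    have hb1 : M - b0 < M := by omega
    set j : Fin M := ⟨M - b0, hb1⟩ with hjdef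
    have h1 : y j < c := hlo1 j (by simp [hjdef]; omega)
    have h2 : d < y j := hhi1 j (by simp [hjdef])
    linarith
  have hLcnt : cnt (Set.Icc c d) = M - a0 - b0 := by
    have h1 : cnt (Set.Icc c d) ≤ (M - b0) - a0 := by
      rw [hcnt_eq]
      apply card_filter_le _ a0 (M - b0)
      intro j hj
      constructor
      · by_contra h
        push_neg at h
        exact absurd hj.1 (not_le.mpr (hlo1 j h))
      · by_contra h
        push_neg at h
        exact absurd hj.2 (not_le.mpr (hhi1 j h))
    have h2 : (M - b0) - a0 ≤ cnt (Set.Icc c d) := by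
      rw [hcnt_eq]
      apply card_filter_ge hM _ a0 (M - b0) (by omega)
      intro j hj1 hj2
      constructor
      · by_contra h
        push_neg at h
        have := hlo2 j h
        omega
      · by_contra h
        push_neg at h
        have := hhi2 j h
        omega
    omega
  -- partition points
  set z : ℕ → ℝ := fun n => if n = 0 then 0 else if h : n ≤ M then y ⟨n-1, by omega⟩ else 1
    with hzdef
  have hz0 : z 0 = 0 := by simp [hzdef]
  have hzval : ∀ n, 1 ≤ n → ∀ h : n ≤ M, z n = y ⟨n-1, by omega⟩ := by
    intro n h1 h2
    simp only [hzdef]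
    rw [if_neg (by omega), dif_pos h2]
  have hzM1 : z (M+1) = 1 := by
    simp only [hzdef]
    rw [if_neg (by omega), dif_neg (by omega)]
  have hzmono : Monotone z := by
    apply monotone_nat_of_le_succ
    intro n
    rcases Nat.eq_zero_or_pos n with h0 | h0
    · subst h0
      rw [hz0, hzval 1 le_rfl hM]
      exact (hy01 _).1
    · rcases le_or_gt (n+1) M with h1 | h1
      · rw [hzval n h0 (by omega), hzval (n+1) (by omega) h1]
        exact hymono (Fin.mk_le_mk.mpr (by omega))
      · rcases le_or_gt n M with h2 | h2
        · have : z (n+1) = 1 := by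
            simp only [hzdef]; rw [if_neg (by omega), dif_neg (by omega)]
          rw [this, hzval n h0 h2]
          exact (hy01 _).2
        · have e1 : z n = 1 := by
            simp only [hzdef]; rw [if_neg (by omega), dif_neg (by omega)]
          have e2 : z (n+1) = 1 := by
            simp only [hzdef]; rw [if_neg (by omega), dif_neg (by omega)]
          rw [e1, e2]
  set w : ℕ → ℝ := fun n => min d (max c (z n)) with hwdef
  have hwn : ∀ n, w n = min d (max c (z n)) := fun n => by rw [hwdef]
  have hwmono : Monotone w := by
    intro m n h
    rw [hwn, hwn]
    exact min_le_min le_rfl (max_le_max le_rfl (hzmono h))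
  have hw0 : w 0 = c := by
    rw [hwn, hz0, max_eq_left hc, min_eq_right hcd]
  have hwM1 : w (M+1) = d := by
    rw [hwn, hzM1, max_eq_right (hcd.trans hd), min_eq_left hd]
  have hwc : ∀ n, c ≤ w n := fun n => by
    rw [hwn]; exact le_min hcd (le_max_left _ _)
  have hwd : ∀ n, w n ≤ d := fun n => by rw [hwn]; exact min_le_left _ _
  -- integrability
  have hlbv := hbv.locallyBoundedVariationOn
  have h0mem : (0:ℝ) ∈ Set.Icc (0:ℝ) 1 := by constructor <;> norm_num
  have hInt : ∀ u v : ℝ, 0 ≤ u → u ≤ v → v ≤ 1 → IntervalIntegrable g volume u v := by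
    intro u v hu huv hv
    have hp : MonotoneOn (variationOnFromTo g (Set.Icc 0 1) 0) (Set.Icc 0 1) :=
      variationOnFromTo.monotoneOn hlbv h0mem
    have hq : MonotoneOn (variationOnFromTo g (Set.Icc 0 1) 0 - g) (Set.Icc 0 1) :=
      variationOnFromTo.sub_self_monotoneOn hlbv h0mem
    have huv' : Set.uIcc u v ⊆ Set.Icc 0 1 := by
      rw [Set.uIcc_of_le huv]; exact Set.Icc_subset_Icc hu hv
    have hip : IntervalIntegrable (variationOnFromTo g (Set.Icc 0 1) 0) volume u v :=
      (hp.mono huv').intervalIntegrable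
    have hiq : IntervalIntegrable (variationOnFromTo g (Set.Icc 0 1) 0 - g) volume u v :=
      (hq.mono huv').intervalIntegrable
    have hgeq : g = variationOnFromTo g (Set.Icc 0 1) 0 -
        (variationOnFromTo g (Set.Icc 0 1) 0 - g) := by
      funext t; simp
    rw [hgeq]
    exact hip.sub hiq
  have hfin01 : eVariationOn g (Set.Icc 0 1) ≠ ⊤ := hbv
  have hfinmono : ∀ u v : ℝ, 0 ≤ u → v ≤ 1 → eVariationOn g (Set.Icc u v) ≠ ⊤ := by
    intro u v hu hv
    exact ne_top_of_le_ne_top hfin01 (eVariationOn.mono g (Set.Icc_subset_Icc hu hv))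
  -- interval membership count lemmas
  have KCL1 : ∀ n, n ≤ M + 1 → ∀ j : Fin M, y j ∈ Set.Ico c (w n) →
      a0 ≤ (j:ℕ) ∧ (j:ℕ) + 2 ≤ n := by
    intro n hn j hj
    obtain ⟨hcy, hylt⟩ := hj
    have hja : a0 ≤ (j:ℕ) := by
      by_contra h
      push_neg at h
      exact absurd hcy (not_le.mpr (hlo1 j h))
    refine ⟨hja, ?_⟩
    have hzlt : y j < z n := by
      rw [hwn] at hylt
      have h1 : y j < max c (z n) := lt_of_lt_of_le hylt (min_le_right _ _)
      rcases le_or_gt (z n) c with h | h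
      · rw [max_eq_left h] at h1; exact absurd hcy (not_le.mpr h1)
      · rwa [max_eq_right h.le] at h1
    rcases Nat.eq_zero_or_pos n with h0 | h0
    · exfalso
      rw [h0, hz0] at hzlt
      exact absurd (hy01 j).1 (not_le.mpr hzlt)
    rcases le_or_gt n M with hnM | hnM
    · rw [hzval n h0 hnM] at hzlt
      have hjn : (j:ℕ) < n - 1 := by
        by_contra h
        push_neg at h
        have : y ⟨n-1, by omega⟩ ≤ y j :=
          hymono (by rw [Fin.le_def]; exact (show n - 1 ≤ (j:ℕ) by omega))
        linarith
      omega
    · have := j.isLt; omega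
  have KCL2 : ∀ n, n ≤ M + 1 → ∀ j : Fin M, a0 ≤ (j:ℕ) → (j:ℕ) + 1 ≤ n →
      (j:ℕ) < M - b0 → y j ∈ Set.Icc c (w n) := by
    intro n hn j hja hjn hjb
    have hcy : c ≤ y j := le_of_not_gt (fun h => by have := hlo2 j h; omega)
    have hyd : y j ≤ d := le_of_not_gt (fun h => by have := hhi2 j h; omega)
    rw [Set.mem_Icc, hwn]
    refine ⟨hcy, le_min hyd (le_trans ?_ (le_max_right c (z n)))⟩
    rcases le_or_gt n M with hnM | hnM
    · rw [hzval n (by omega) hnM]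
      exact hymono (by rw [Fin.le_def]; exact (show (j:ℕ) ≤ n - 1 by omega))
    · have hmm : n = M + 1 := by omega
      rw [hmm, hzM1]
      exact (hy01 j).2
  have KCR1 : ∀ n, n ≤ M + 1 → ∀ j : Fin M, y j ∈ Set.Ioc (w n) d →
      n ≤ (j:ℕ) ∧ (j:ℕ) < M - b0 := by
    intro n hn j hj
    obtain ⟨hlt, hled⟩ := hj
    have hjb : (j:ℕ) < M - b0 := by
      by_contra h
      push_neg at h
      exact absurd hled (not_le.mpr (hhi1 j h))
    refine ⟨?_, hjb⟩
    have hzlt : z n < y j := by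
      rw [hwn] at hlt
      rcases le_or_gt d (max c (z n)) with h | h
      · rw [min_eq_left h] at hlt
        exact absurd hled (not_le.mpr hlt)
      · rw [min_eq_right h.le] at hlt
        exact lt_of_le_of_lt (le_max_right c (z n)) hlt
    rcases Nat.eq_zero_or_pos n with h0 | h0
    · omega
    rcases le_or_gt n M with hnM | hnM
    · rw [hzval n h0 hnM] at hzlt
      by_contra h
      push_neg at h
      have : y j ≤ y ⟨n-1, by omega⟩ :=
        hymono (by rw [Fin.le_def]; exact (show (j:ℕ) ≤ n - 1 by omega))
      linarith
    · exfalso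
      have hmm : n = M + 1 := by omega
      rw [hmm, hzM1] at hzlt
      exact absurd (hy01 j).2 (not_le.mpr hzlt)
  have KCR2 : ∀ n, n ≤ M + 1 → ∀ j : Fin M, a0 ≤ (j:ℕ) → n ≤ (j:ℕ) + 1 →
      (j:ℕ) < M - b0 → y j ∈ Set.Icc (w n) d := by
    intro n hn j hja hnj hjb
    have hcy : c ≤ y j := le_of_not_gt (fun h => by have := hlo2 j h; omega)
    have hyd : y j ≤ d := le_of_not_gt (fun h => by have := hhi2 j h; omega)
    rw [Set.mem_Icc, hwn]
    refine ⟨le_trans (min_le_right d (max c (z n))) (max_le hcy ?_), hyd⟩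
    rcases Nat.eq_zero_or_pos n with h0 | h0
    · rw [h0, hz0]; exact (hy01 j).1
    rcases le_or_gt n M with hnM | hnM
    · rw [hzval n h0 hnM]
      exact hymono (by rw [Fin.le_def]; exact (show n - 1 ≤ (j:ℕ) by omega))
    · exfalso
      have := j.isLt
      omega
  -- degenerate pieces
  have hwlo : ∀ m, m ≤ a0 → w m = c := by
    intro m hm
    rcases Nat.eq_zero_or_pos m with h0 | h0
    · rw [h0]; exact hw0
    · have hmM : m ≤ M := le_trans hm ha0M
      have hzc : z m < c := by
        rw [hzval m h0 hmM]
        exact hlo1 _ (show m - 1 < a0 by omega)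
      rw [hwn, max_eq_left hzc.le, min_eq_right hcd]
  have hwhi : ∀ m, M - b0 < m → m ≤ M + 1 → w m = d := by
    intro m h1 h2
    rcases le_or_gt m M with hmM | hmM
    · have hm0 : 1 ≤ m := by omega
      have hdz : d < z m := by
        rw [hzval m hm0 hmM]
        exact hhi1 _ (show M - b0 ≤ m - 1 by omega)
      rw [hwn, min_eq_left]
      exact le_trans hdz.le (le_max_right _ _)
    · have hmm : m = M + 1 := by omega
      rw [hmm, hwM1]
  -- key discrepancy bounds
  have key : ∀ (tt : ℝ) (k : ℕ), c ≤ tt → tt ≤ d →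
      cnt (Set.Ico c tt) ≤ k → k ≤ cnt (Set.Icc c tt) → |(k:ℝ)/M - (tt - c)| ≤ D := by
    intro tt k h1 h2 hk1 hk2
    exact hDk (Set.Ico c tt) (Set.Icc c tt) Set.ordConnected_Ico Set.ordConnected_Icc
      (fun s hs => ⟨hs.1, le_trans (le_of_lt hs.2) h2⟩)
      (Set.Icc_subset_Icc le_rfl h2) k (tt - c)
      (by rw [Real.volume_Ico]; exact ENNReal.toReal_ofReal (by linarith))
      (by rw [Real.volume_Icc]; exact ENNReal.toReal_ofReal (by linarith))
      hk1 hk2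
  have key' : ∀ (tt : ℝ) (k : ℕ), c ≤ tt → tt ≤ d →
      cnt (Set.Ioc tt d) ≤ k → k ≤ cnt (Set.Icc tt d) → |(k:ℝ)/M - (d - tt)| ≤ D := by
    intro tt k h1 h2 hk1 hk2
    exact hDk (Set.Ioc tt d) (Set.Icc tt d) Set.ordConnected_Ioc Set.ordConnected_Icc
      (fun s hs => ⟨le_trans h1 (le_of_lt hs.1), hs.2⟩)
      (Set.Icc_subset_Icc h1 le_rfl) k (d - tt)
      (by rw [Real.volume_Ioc]; exact ENNReal.toReal_ofReal (by linarith))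
      (by rw [Real.volume_Icc]; exact ENNReal.toReal_ofReal (by linarith))
      hk1 hk2
  -- variation of pieces
  obtain ⟨Vn, hVn⟩ : ∃ f : ℕ → ℝ,
      ∀ n, f n = (eVariationOn g (Set.Icc (w n) (w (n+1)))).toReal := ⟨_, fun _ => rfl⟩
  have hVn_nonneg : ∀ n, 0 ≤ Vn n := fun n => by rw [hVn]; exact ENNReal.toReal_nonneg
  have hVn_sum : ∑ n ∈ Finset.range (M+1), Vn n ≤ (eVariationOn g (Set.Icc c d)).toReal := by
    have h1 := evar_sum_pieces g w (M+1) (fun n _ => hwmono (Nat.le_succ n))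
    have h2 : eVariationOn g (Set.Icc (w 0) (w (M+1))) = eVariationOn g (Set.Icc c d) := by
      rw [hw0, hwM1]
    rw [h2] at h1
    have h3 : ∀ n ∈ Finset.range (M+1), eVariationOn g (Set.Icc (w n) (w (n+1))) ≠ ⊤ :=
      fun n _ => hfinmono _ _ (hc.trans (hwc n)) ((hwd (n+1)).trans hd)
    calc ∑ n ∈ Finset.range (M+1), Vn n
        = (∑ n ∈ Finset.range (M+1), eVariationOn g (Set.Icc (w n) (w (n+1)))).toReal := by
          rw [ENNReal.toReal_sum h3]
          exact Finset.sum_congr rfl (fun n _ => hVn n)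
      _ ≤ _ := ENNReal.toReal_mono (hfinmono c d hc hd) h1
  -- uniform piece bound
  have hUbound : ∀ C0 : ℝ,
      (∀ n, a0 ≤ n → n ≤ M - b0 →
        |C0 + n * (1/(M:ℝ)) - w n| ≤ D ∧ |C0 + n * (1/(M:ℝ)) - w (n+1)| ≤ D) →
      ∀ n ∈ Finset.range (M+1),
        |(C0 + n * (1/(M:ℝ)) - w (n+1)) * g (w (n+1)) - (C0 + n * (1/(M:ℝ)) - w n) * g (w n)
          + ∫ s in (w n)..(w (n+1)), g s| ≤ D * Vn n := by
    intro C0 hEB n hn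
    rw [Finset.mem_range] at hn
    by_cases hgood : a0 ≤ n ∧ n ≤ M - b0
    · have hb := RS_bound g (w n) (w (n+1)) (C0 + n * (1/(M:ℝ))) (hwmono (Nat.le_succ n))
        (hfinmono _ _ (hc.trans (hwc n)) ((hwd (n+1)).trans hd))
        (fun u v hu huv hv => hInt u v (le_trans (hc.trans (hwc n)) hu) huv
          (le_trans hv ((hwd (n+1)).trans hd)))
      refine le_trans hb ?_
      rw [hVn]
      exact mul_le_mul_of_nonneg_right
        (max_le (hEB n hgood.1 hgood.2).1 (hEB n hgood.1 hgood.2).2) ENNReal.toReal_nonneg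
    · have hww : w n = w (n+1) := by
        rcases not_and_or.mp hgood with h | h
        · push_neg at h
          rw [hwlo n (by omega), hwlo (n+1) (by omega)]
        · push_neg at h
          rw [hwhi n (by omega) (by omega), hwhi (n+1) (by omega) (by omega)]
      rw [hww, intervalIntegral.integral_same, sub_self, zero_add, abs_zero]
      exact mul_nonneg hD0 (hVn_nonneg n)
  -- vanishing facts
  have hgy0lo : ∀ j : Fin M, (j:ℕ) < a0 → g (y j) = 0 := fun j hj =>
    hvanish _ (fun hmem => absurd hmem.1 (not_le.mpr (hlo1 j hj)))
  have hgy0hi : ∀ j : Fin M, M - b0 ≤ (j:ℕ) → g (y j) = 0 := fun j hj =>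
    hvanish _ (fun hmem => absurd hmem.2 (not_le.mpr (hhi1 j hj)))
  have hwyj : ∀ j : Fin M, a0 ≤ (j:ℕ) → (j:ℕ) < M - b0 → w ((j:ℕ)+1) = y j := by
    intro j h1 h2
    have hcy : c ≤ y j := le_of_not_gt (fun h => by have := hlo2 j h; omega)
    have hyd : y j ≤ d := le_of_not_gt (fun h => by have := hhi2 j h; omega)
    have hzj : z ((j:ℕ)+1) = y j := by
      rw [hzval ((j:ℕ)+1) (by omega) (by have := j.isLt; omega)]
      exact congrArg y (Fin.ext (by simp))
    rw [hwn, hzj, max_eq_right hcy, min_eq_right hyd]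
  -- the sum of g over partition points
  have hgy : ∑ j : Fin M, g (y j) = ∑ m, g (x m) := by
    have h1 := Equiv.sum_comp σ (fun m => g (x m))
    simpa [hy, Function.comp] using h1
  have hSw : ∑ n ∈ Finset.range (M+1), g (w (n+1)) =
      (a0:ℝ) * g c + (b0:ℝ) * g d + (∑ m, g (x m)) + g d := by
    rw [Finset.sum_range_succ, hwM1]
    have hstep : ∀ j : Fin M, g (w ((j:ℕ)+1)) =
        ((if (j:ℕ) < a0 then g c else 0) + (if M - b0 ≤ (j:ℕ) then g d else 0)) + g (y j) := by
      intro j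
      rcases lt_or_ge (j:ℕ) a0 with h | h
      · rw [if_pos h, if_neg (by omega), hwlo ((j:ℕ)+1) (by omega), hgy0lo j h]
        ring
      · rcases le_or_gt (M - b0) (j:ℕ) with h2 | h2
        · rw [if_neg (by omega), if_pos h2,
            hwhi ((j:ℕ)+1) (by omega) (by have := j.isLt; omega), hgy0hi j h2]
          ring
        · rw [if_neg (by omega), if_neg (by omega), hwyj j h h2]
          ring
    have hsum1 : ∑ n ∈ Finset.range M, g (w (n+1)) = ∑ j : Fin M, g (w ((j:ℕ)+1)) :=
      (Fin.sum_univ_eq_sum_range (fun n => g (w (n+1))) M).symm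
    rw [hsum1, Finset.sum_congr rfl (fun j _ => hstep j), Finset.sum_add_distrib,
      Finset.sum_add_distrib]
    have hA : ∑ j : Fin M, (if (j:ℕ) < a0 then g c else 0) = (a0:ℝ) * g c := by
      calc ∑ j : Fin M, (if (j:ℕ) < a0 then g c else 0)
          = ∑ j : Fin M, (if y j ∈ Set.Iio c then g c else 0) := by
            apply Finset.sum_congr rfl
            intro j _
            by_cases h : (j:ℕ) < a0
            · rw [if_pos h, if_pos (Set.mem_Iio.mpr (hlo1 j h))]
            · rw [if_neg h, if_neg (fun hyy => h (hlo2 j (Set.mem_Iio.mp hyy)))]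
        _ = g c * ∑ j : Fin M, (if y j ∈ Set.Iio c then (1:ℝ) else 0) := by
            rw [Finset.mul_sum]
            apply Finset.sum_congr rfl
            intro j _
            by_cases h : y j ∈ Set.Iio c <;> simp [h]
        _ = (a0:ℝ) * g c := by
            rw [Finset.sum_boole, ha0eq]
            ring
    have hB : ∑ j : Fin M, (if M - b0 ≤ (j:ℕ) then g d else 0) = (b0:ℝ) * g d := by
      calc ∑ j : Fin M, (if M - b0 ≤ (j:ℕ) then g d else 0)
          = ∑ j : Fin M, (if y j ∈ Set.Ioi d then g d else 0) := by
            apply Finset.sum_congr rfl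
            intro j _
            by_cases h : M - b0 ≤ (j:ℕ)
            · rw [if_pos h, if_pos (Set.mem_Ioi.mpr (hhi1 j h))]
            · rw [if_neg h, if_neg (fun hyy => h (hhi2 j (Set.mem_Ioi.mp hyy)))]
        _ = g d * ∑ j : Fin M, (if y j ∈ Set.Ioi d then (1:ℝ) else 0) := by
            rw [Finset.mul_sum]
            apply Finset.sum_congr rfl
            intro j _
            by_cases h : y j ∈ Set.Ioi d <;> simp [h]
        _ = (b0:ℝ) * g d := by
            rw [Finset.sum_boole, hb0eq]
            ring
    rw [hA, hB, hgy]
  -- integral identities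
  have hJint1 : IntervalIntegrable g volume 0 c := hInt 0 c le_rfl hc (hcd.trans hd)
  have hJint2 : IntervalIntegrable g volume c d := hInt c d hc hcd hd
  have hJint3 : IntervalIntegrable g volume d 1 := hInt d 1 (hc.trans hcd) hd le_rfl
  have hI0c : (∫ s in (0:ℝ)..c, g s) = 0 := by
    have hae : ∀ᵐ t : ℝ ∂volume, t ∈ Set.uIoc (0:ℝ) c → g t = 0 := by
      rw [MeasureTheory.ae_iff]
      apply measure_mono_null _ (Real.volume_singleton (a := c))
      intro t ht
      simp only [Set.mem_setOf_eq] at ht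
      push_neg at ht
      rcases ht with ⟨hmem, hgt⟩
      rw [Set.uIoc_of_le hc] at hmem
      simp only [Set.mem_singleton_iff]
      by_contra hne
      have htc : t < c := lt_of_le_of_ne hmem.2 hne
      exact hgt (hvanish t (fun hm => absurd hm.1 (not_le.mpr htc)))
    calc (∫ s in (0:ℝ)..c, g s) = ∫ s in (0:ℝ)..c, (0:ℝ) :=
        intervalIntegral.integral_congr_ae hae
      _ = 0 := intervalIntegral.integral_zero
  have hId1 : (∫ s in d..(1:ℝ), g s) = 0 := by
    have hae : ∀ᵐ t : ℝ ∂volume, t ∈ Set.uIoc d (1:ℝ) → g t = 0 := by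
      apply Filter.Eventually.of_forall
      intro t ht
      rw [Set.uIoc_of_le hd] at ht
      exact hvanish t (fun hm => absurd hm.2 (not_le.mpr ht.1))
    calc (∫ s in d..(1:ℝ), g s) = ∫ s in d..(1:ℝ), (0:ℝ) :=
        intervalIntegral.integral_congr_ae hae
      _ = 0 := intervalIntegral.integral_zero
  have hI01 : (∫ s in (0:ℝ)..1, g s) = ∫ s in c..d, g s := by
    have h1 := intervalIntegral.integral_add_adjacent_intervals hJint1 hJint2
    have h2 := intervalIntegral.integral_add_adjacent_intervals (hJint1.trans hJint2) hJint3
    rw [hI0c] at h1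
    rw [hId1] at h2
    linarith
  have hIntPieces : ∀ n, n < M + 1 → IntervalIntegrable g volume (w n) (w (n+1)) :=
    fun n _ => hInt _ _ (hc.trans (hwc n)) (hwmono (Nat.le_succ n)) ((hwd (n+1)).trans hd)
  -- casts
  have hab0M : a0 + b0 ≤ M := by omega
  have hcastL : ((M - a0 - b0 : ℕ) : ℝ) = (M:ℝ) - a0 - b0 := by
    rw [Nat.cast_sub (by omega), Nat.cast_sub ha0M]
  obtain ⟨discR, hdiscR⟩ : ∃ r : ℝ, r = ((M - a0 - b0 : ℕ) : ℝ)/M - (d - c) := ⟨_, rfl⟩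
  have hdisc_bound : |discR| ≤ D := by
    have h1 := hD' (Set.Icc c d) Set.ordConnected_Icc (subset_refl _)
    rw [hLcnt, Real.volume_Icc, ENNReal.toReal_ofReal (by linarith)] at h1
    rw [hdiscR]
    exact h1
  -- budget bounds
  have hbudget_d : d < 1 →
      |g d| + (eVariationOn g (Set.Icc c d)).toReal ≤ (eVariationOn g (Set.Icc 0 1)).toReal := by
    intro hd1
    have hg1 : g 1 = 0 := hvanish 1 (fun hm => absurd hm.2 (not_le.mpr hd1))
    have hfind1 : eVariationOn g (Set.Icc d 1) ≠ ⊤ := hfinmono d 1 (hc.trans hcd) le_rfl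
    have h2 : |g d| ≤ (eVariationOn g (Set.Icc d 1)).toReal := by
      have h1 : edist (g d) (g 1) ≤ eVariationOn g (Set.Icc d 1) :=
        eVariationOn.edist_le g (Set.left_mem_Icc.mpr hd) (Set.right_mem_Icc.mpr hd)
      calc |g d| = |g d - g 1| := by rw [hg1, sub_zero]
        _ = dist (g d) (g 1) := (Real.dist_eq _ _).symm
        _ = (edist (g d) (g 1)).toReal := dist_edist _ _
        _ ≤ _ := ENNReal.toReal_mono hfind1 h1
    have h3 := eVariationOn.Icc_add_Icc g (s := Set.univ) hcd hd (Set.mem_univ d)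
    simp only [Set.univ_inter] at h3
    have h4 : eVariationOn g (Set.Icc c d) + eVariationOn g (Set.Icc d 1) ≤
        eVariationOn g (Set.Icc 0 1) := by
      rw [h3]
      exact eVariationOn.mono g (Set.Icc_subset_Icc hc le_rfl)
    have h5 := ENNReal.toReal_mono hfin01 h4
    rw [ENNReal.toReal_add (hfinmono c d hc hd) hfind1] at h5
    linarith
  have hbudget_c : 0 < c →
      |g c| + (eVariationOn g (Set.Icc c d)).toReal ≤ (eVariationOn g (Set.Icc 0 1)).toReal := by
    intro hc0
    have hg0 : g 0 = 0 := hvanish 0 (fun hm => absurd hm.1 (not_le.mpr hc0))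
    have hfin0c : eVariationOn g (Set.Icc 0 c) ≠ ⊤ := hfinmono 0 c le_rfl (hcd.trans hd)
    have h2 : |g c| ≤ (eVariationOn g (Set.Icc 0 c)).toReal := by
      have h1 : edist (g c) (g 0) ≤ eVariationOn g (Set.Icc 0 c) :=
        eVariationOn.edist_le g (Set.right_mem_Icc.mpr hc) (Set.left_mem_Icc.mpr hc)
      calc |g c| = |g c - g 0| := by rw [hg0, sub_zero]
        _ = dist (g c) (g 0) := (Real.dist_eq _ _).symm
        _ = (edist (g c) (g 0)).toReal := dist_edist _ _
        _ ≤ _ := ENNReal.toReal_mono hfin0c h1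
    have h3 := eVariationOn.Icc_add_Icc g (s := Set.univ) hc hcd (Set.mem_univ c)
    simp only [Set.univ_inter] at h3
    have h4 : eVariationOn g (Set.Icc 0 c) + eVariationOn g (Set.Icc c d) ≤
        eVariationOn g (Set.Icc 0 1) := by
      rw [h3]
      exact eVariationOn.mono g (Set.Icc_subset_Icc le_rfl hd)
    have h5 := ENNReal.toReal_mono hfin01 h4
    rw [ENNReal.toReal_add hfin0c (hfinmono c d hc hd)] at h5
    linarith
  -- bound on the telescoped sum
  have hSUbound : ∀ C0 : ℝ,
      (∀ n, a0 ≤ n → n ≤ M - b0 →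
        |C0 + n * (1/(M:ℝ)) - w n| ≤ D ∧ |C0 + n * (1/(M:ℝ)) - w (n+1)| ≤ D) →
      |∑ n ∈ Finset.range (M+1),
        ((C0 + n * (1/(M:ℝ)) - w (n+1)) * g (w (n+1)) - (C0 + n * (1/(M:ℝ)) - w n) * g (w n)
          + ∫ s in (w n)..(w (n+1)), g s)| ≤ D * (eVariationOn g (Set.Icc c d)).toReal := by
    intro C0 hEB
    calc |∑ n ∈ Finset.range (M+1),
        ((C0 + n * (1/(M:ℝ)) - w (n+1)) * g (w (n+1)) - (C0 + n * (1/(M:ℝ)) - w n) * g (w n)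
          + ∫ s in (w n)..(w (n+1)), g s)|
        ≤ ∑ n ∈ Finset.range (M+1),
          |(C0 + n * (1/(M:ℝ)) - w (n+1)) * g (w (n+1)) - (C0 + n * (1/(M:ℝ)) - w n) * g (w n)
            + ∫ s in (w n)..(w (n+1)), g s| := Finset.abs_sum_le_sum_abs _ _
      _ ≤ ∑ n ∈ Finset.range (M+1), D * Vn n := Finset.sum_le_sum (hUbound C0 hEB)
      _ = D * ∑ n ∈ Finset.range (M+1), Vn n := by rw [Finset.mul_sum]
      _ ≤ D * (eVariationOn g (Set.Icc c d)).toReal :=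
          mul_le_mul_of_nonneg_left hVn_sum hD0
  -- endpoint bounds, left-anchored version
  have hEB_A : ∀ n, a0 ≤ n → n ≤ M - b0 →
      |c - (a0:ℝ)/M + n * (1/(M:ℝ)) - w n| ≤ D ∧
      |c - (a0:ℝ)/M + n * (1/(M:ℝ)) - w (n+1)| ≤ D := by
    intro n hna hnb
    have hnM1 : n ≤ M + 1 := by omega
    have hn1M1 : n + 1 ≤ M + 1 := by omega
    have hcastn : ((n - a0 : ℕ) : ℝ) = (n:ℝ) - a0 := Nat.cast_sub hna
    constructor
    · have hb1 : cnt (Set.Ico c (w n)) ≤ n - a0 := by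
        rw [hcnt_eq]
        have := card_filter_le (fun j : Fin M => y j ∈ Set.Ico c (w n)) a0 (n-1)
          (fun j hj => by have := KCL1 n hnM1 j hj; omega)
        omega
      have hb2 : n - a0 ≤ cnt (Set.Icc c (w n)) := by
        rw [hcnt_eq]
        have := card_filter_ge hM (fun j : Fin M => y j ∈ Set.Icc c (w n)) a0
          (min n (M - b0)) (by omega)
          (fun j hj1 hj2 => KCL2 n hnM1 j hj1 (by omega) (by omega))
        omega
      have hkk := key (w n) (n - a0) (hwc n) (hwd n) hb1 hb2
      rw [hcastn] at hkk
      have heq : c - (a0:ℝ)/M + n * (1/(M:ℝ)) - w n = ((n:ℝ) - a0)/M - (w n - c) := by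
        field_simp
        ring
      rw [heq]
      exact hkk
    · have hb1 : cnt (Set.Ico c (w (n+1))) ≤ n - a0 := by
        rw [hcnt_eq]
        have := card_filter_le (fun j : Fin M => y j ∈ Set.Ico c (w (n+1))) a0 n
          (fun j hj => by have := KCL1 (n+1) hn1M1 j hj; omega)
        omega
      have hb2 : n - a0 ≤ cnt (Set.Icc c (w (n+1))) := by
        rw [hcnt_eq]
        have := card_filter_ge hM (fun j : Fin M => y j ∈ Set.Icc c (w (n+1))) a0 n (by omega)
          (fun j hj1 hj2 => KCL2 (n+1) hn1M1 j hj1 (by omega) (by omega))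
        omega
      have hkk := key (w (n+1)) (n - a0) (hwc (n+1)) (hwd (n+1)) hb1 hb2
      rw [hcastn] at hkk
      have heq : c - (a0:ℝ)/M + n * (1/(M:ℝ)) - w (n+1) = ((n:ℝ) - a0)/M - (w (n+1) - c) := by
        field_simp
        ring
      rw [heq]
      exact hkk
  -- endpoint bounds, right-anchored version
  have hEB_B : ∀ n, a0 ≤ n → n ≤ M - b0 →
      |c - (a0:ℝ)/M - discR + n * (1/(M:ℝ)) - w n| ≤ D ∧
      |c - (a0:ℝ)/M - discR + n * (1/(M:ℝ)) - w (n+1)| ≤ D := by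
    intro n hna hnb
    have hnM1 : n ≤ M + 1 := by omega
    have hn1M1 : n + 1 ≤ M + 1 := by omega
    have hcastn : ((M - b0 - n : ℕ) : ℝ) = (M:ℝ) - b0 - n := by
      rw [Nat.cast_sub (by omega), Nat.cast_sub hb0M]
    constructor
    · have hb1 : cnt (Set.Ioc (w n) d) ≤ M - b0 - n := by
        rw [hcnt_eq]
        have := card_filter_le (fun j : Fin M => y j ∈ Set.Ioc (w n) d) n (M - b0)
          (fun j hj => KCR1 n hnM1 j hj)
        omega
      have hb2 : M - b0 - n ≤ cnt (Set.Icc (w n) d) := by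
        rw [hcnt_eq]
        have := card_filter_ge hM (fun j : Fin M => y j ∈ Set.Icc (w n) d) (max a0 n)
          (M - b0) (by omega)
          (fun j hj1 hj2 => KCR2 n hnM1 j (by omega) (by omega) (by omega))
        omega
      have hkk := key' (w n) (M - b0 - n) (hwc n) (hwd n) hb1 hb2
      rw [hcastn] at hkk
      have heq : c - (a0:ℝ)/M - discR + n * (1/(M:ℝ)) - w n =
          -(((M:ℝ) - b0 - n)/M - (d - w n)) := by
        rw [hdiscR, hcastL]
        field_simp
        ring
      rw [heq, abs_neg]
      exact hkk
    · have hb1 : cnt (Set.Ioc (w (n+1)) d) ≤ M - b0 - n := by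
        rw [hcnt_eq]
        have := card_filter_le (fun j : Fin M => y j ∈ Set.Ioc (w (n+1)) d) (n+1) (M - b0)
          (fun j hj => KCR1 (n+1) hn1M1 j hj)
        omega
      have hb2 : M - b0 - n ≤ cnt (Set.Icc (w (n+1)) d) := by
        rw [hcnt_eq]
        have := card_filter_ge hM (fun j : Fin M => y j ∈ Set.Icc (w (n+1)) d) (max a0 n)
          (M - b0) (by omega)
          (fun j hj1 hj2 => KCR2 (n+1) hn1M1 j (by omega) (by omega) (by omega))
        omega
      have hkk := key' (w (n+1)) (M - b0 - n) (hwc (n+1)) (hwd (n+1)) hb1 hb2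
      rw [hcastn] at hkk
      have heq : c - (a0:ℝ)/M - discR + n * (1/(M:ℝ)) - w (n+1) =
          -(((M:ℝ) - b0 - n)/M - (d - w (n+1))) := by
        rw [hdiscR, hcastL]
        field_simp
        ring
      rw [heq, abs_neg]
      exact hkk
  -- route-A identity
  have htelA := telescope_id g w M (c - (a0:ℝ)/M) (1/(M:ℝ)) hIntPieces
  have hidentA : (1/(M:ℝ)) * (∑ m, g (x m)) - (∫ s in (0:ℝ)..1, g s) =
      discR * g d - ∑ n ∈ Finset.range (M+1),
        ((c - (a0:ℝ)/M + n * (1/(M:ℝ)) - w (n+1)) * g (w (n+1))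
          - (c - (a0:ℝ)/M + n * (1/(M:ℝ)) - w n) * g (w n)
          + ∫ s in (w n)..(w (n+1)), g s) := by
    rw [htelA, hw0, hwM1, hSw, hI01, hdiscR, hcastL]
    push_cast
    field_simp
    ring
  -- final case analysis
  rcases lt_or_ge d 1 with hd1 | hd1
  · -- case d < 1 : use left-anchored route, error term at d
    rw [hidentA]
    have hSU := hSUbound (c - (a0:ℝ)/M) hEB_A
    refine le_trans (abs_sub _ _) ?_
    calc |discR * g d| + _
        ≤ |discR| * |g d| + D * (eVariationOn g (Set.Icc c d)).toReal := by
          rw [abs_mul]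
          exact add_le_add le_rfl hSU
      _ ≤ D * |g d| + D * (eVariationOn g (Set.Icc c d)).toReal := by
          exact add_le_add (mul_le_mul_of_nonneg_right hdisc_bound (abs_nonneg _)) le_rfl
      _ = D * (|g d| + (eVariationOn g (Set.Icc c d)).toReal) := by ring
      _ ≤ D * (eVariationOn g (Set.Icc 0 1)).toReal :=
          mul_le_mul_of_nonneg_left (hbudget_d hd1) hD0
      _ = (eVariationOn g (Set.Icc 0 1)).toReal * D := mul_comm _ _
  · have hd1' : d = 1 := le_antisymm hd hd1
    rcases lt_or_ge 0 c with hc0 | hc0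
    · -- case d = 1, c > 0 : right-anchored route, error term at c
      have htelB := telescope_id g w M (c - (a0:ℝ)/M - discR) (1/(M:ℝ)) hIntPieces
      have hident : (1/(M:ℝ)) * (∑ m, g (x m)) - (∫ s in (0:ℝ)..1, g s) =
          discR * g c - ∑ n ∈ Finset.range (M+1),
            ((c - (a0:ℝ)/M - discR + n * (1/(M:ℝ)) - w (n+1)) * g (w (n+1))
              - (c - (a0:ℝ)/M - discR + n * (1/(M:ℝ)) - w n) * g (w n)
              + ∫ s in (w n)..(w (n+1)), g s) := by
        rw [htelB, hw0, hwM1, hSw, hI01, hdiscR, hcastL]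
        push_cast
        field_simp
        ring
      rw [hident]
      have hSU := hSUbound (c - (a0:ℝ)/M - discR) hEB_B
      refine le_trans (abs_sub _ _) ?_
      calc |discR * g c| + _
          ≤ |discR| * |g c| + D * (eVariationOn g (Set.Icc c d)).toReal := by
            rw [abs_mul]
            exact add_le_add le_rfl hSU
        _ ≤ D * |g c| + D * (eVariationOn g (Set.Icc c d)).toReal := by
            exact add_le_add (mul_le_mul_of_nonneg_right hdisc_bound (abs_nonneg _)) le_rfl
        _ = D * (|g c| + (eVariationOn g (Set.Icc c d)).toReal) := by ring
        _ ≤ D * (eVariationOn g (Set.Icc 0 1)).toReal :=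
            mul_le_mul_of_nonneg_left (hbudget_c hc0) hD0
        _ = (eVariationOn g (Set.Icc 0 1)).toReal * D := mul_comm _ _
    · -- case c = 0 and d = 1 : discrepancy of the full interval is zero
      have hc0' : c = 0 := le_antisymm hc0 hc
      have ha00 : a0 = 0 := by
        rw [ha0eq, Finset.card_eq_zero, Finset.filter_eq_empty_iff]
        intro j _
        simp only [Set.mem_Iio]
        rw [hc0']
        exact not_lt.mpr (hy01 j).1
      have hb00 : b0 = 0 := by
        rw [hb0eq, Finset.card_eq_zero, Finset.filter_eq_empty_iff]
        intro j _
        simp only [Set.mem_Ioi]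
        rw [hd1']
        exact not_lt.mpr (hy01 j).2
      have hdisc0 : discR = 0 := by
        rw [hdiscR, ha00, hb00, hc0', hd1']
        simp only [Nat.sub_zero]
        rw [div_self hMne]
        norm_num
      rw [hidentA, hdisc0, zero_mul, zero_sub, abs_neg]
      have hSU := hSUbound (c - (a0:ℝ)/M) hEB_A
      calc |_| ≤ D * (eVariationOn g (Set.Icc c d)).toReal := hSU
        _ = D * (eVariationOn g (Set.Icc 0 1)).toReal := by rw [hc0', hd1']
        _ = (eVariationOn g (Set.Icc 0 1)).toReal * D := mul_comm _ _
end
end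

section
/- Let N ≥ 3 be an integer and let a ∈ Z_N^* with a ≤ N/2 and canonical continued fraction expansion a/N = [0; a_1, …, a_r] (so that a_1 ≥ 2). Define a* ∈ Z_N^* by a*/N = [0; a_r, a_{r−1}, …, a_1]. Then: (i) the map a ↦ a* is a bijection from { a ∈ Z_N^* : a ≤ N/2 } onto itself; and (ii) with q_i(a/N) and q_i(a*/N) denoting the convergent denominators of a/N and a*/N respectively, and with the convention q_{−1} = 0, one has q_i(a/N) · q_{r−i}(a*/N) + q_{i−1}(a/N) · q_{r−i−1}(a*/N) = N for all 1 ≤ i ≤ r. -/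
open scoped BigOperators
open MeasureTheory

attribute [local instance] Classical.propDecidable

noncomputable section

/-- Value of the continued fraction `[0; a_1, ..., a_r]` given by the list `[a_1, ..., a_r]`. -/
def cfValQ : List ℕ → ℚ
  | [] => 0
  | a :: l => 1 / ((a : ℚ) + cfValQ l)

/-- `l` is the canonical continued fraction expansion of `q`: all partial quotients are
positive, the last one is `> 1`, and the value is `q`. -/
def IsCF (q : ℚ) (l : List ℕ) : Prop :=
  (∀ x ∈ l, 1 ≤ x) ∧ (∀ x, l.getLast? = some x → 2 ≤ x) ∧ cfValQ l = q

/-- The canonical continued fraction expansion `[a_1, ..., a_r]` of a rational `q`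
(the empty list if none exists). -/
def cfList (q : ℚ) : List ℕ :=
  if h : ∃ l, IsCF q l then h.choose else []

/-- `Z_N^*`: the integers `1 ≤ a ≤ N` coprime with `N`. -/
def Zstar (N : ℕ) : Finset ℕ := (Finset.Icc 1 N).filter fun a => Nat.Coprime a N

/-- The convergent denominator `q_i` of the continued fraction given by the list
`[a_1, ..., a_i]` (via the recursion `q_{-1} = 0`, `q_0 = 1`, `q_i = a_i q_{i-1} + q_{i-2}`). -/
def convDen (l : List ℕ) : ℕ :=
  (l.foldl (fun pr a => (a * pr.1 + pr.2, pr.1)) ((1 : ℕ), (0 : ℕ))).1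

/-- `q_j` for a continued fraction list `l`, with integer index `j` and the convention
`q_j = 0` for `j < 0` (in particular `q_{-1} = 0`). -/
def qdenZ (l : List ℕ) (j : ℤ) : ℤ :=
  if j < 0 then 0 else (convDen (l.take j.toNat) : ℤ)

/-- The map `a ↦ a*`, where `a*/N = [0; a_r, ..., a_1]` is obtained by reversing the
continued fraction expansion `a/N = [0; a_1, ..., a_r]`. -/
def starMap (N a : ℕ) : ℕ :=
  (((N : ℚ) * cfValQ ((cfList ((a : ℚ) / N)).reverse)).num).toNat

/-! ### continuant matrices -/

abbrev T4 := ℕ × ℕ × ℕ × ℕ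

def tmul (m n : T4) : T4 :=
  (m.1*n.1 + m.2.1*n.2.2.1, m.1*n.2.1 + m.2.1*n.2.2.2,
   m.2.2.1*n.1 + m.2.2.2*n.2.2.1, m.2.2.1*n.2.1 + m.2.2.2*n.2.2.2)

def Ml : List ℕ → T4
  | [] => (1,0,0,1)
  | a :: l => tmul (a,1,1,0) (Ml l)

lemma tmul_assoc (a b c : T4) : tmul (tmul a b) c = tmul a (tmul b c) := by
  obtain ⟨a1,a2,a3,a4⟩ := a; obtain ⟨b1,b2,b3,b4⟩ := b; obtain ⟨c1,c2,c3,c4⟩ := c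
  simp only [tmul, Prod.mk.injEq]
  refine ⟨by ring, by ring, by ring, by ring⟩

lemma one_tmul (a : T4) : tmul (1,0,0,1) a = a := by
  obtain ⟨a1,a2,a3,a4⟩ := a; simp [tmul]

lemma tmul_one (a : T4) : tmul a (1,0,0,1) = a := by
  obtain ⟨a1,a2,a3,a4⟩ := a; simp [tmul]

lemma Ml_nil : Ml [] = (1,0,0,1) := rfl
lemma Ml_cons (a : ℕ) (l : List ℕ) : Ml (a :: l) = tmul (a,1,1,0) (Ml l) := rfl

lemma Ml_append (l l' : List ℕ) : Ml (l ++ l') = tmul (Ml l) (Ml l') := by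
  induction l with
  | nil => simp [Ml_nil, one_tmul]
  | cons a l ih => simp [Ml_cons, ih, tmul_assoc]

lemma Ml_concat (l : List ℕ) (a : ℕ) :
    Ml (l ++ [a]) = tmul (Ml l) (a,1,1,0) := by
  rw [Ml_append, Ml_cons, Ml_nil, tmul_one]

lemma Ml_cons_expl (a : ℕ) (l : List ℕ) :
    Ml (a :: l) = (a * (Ml l).1 + (Ml l).2.2.1, a * (Ml l).2.1 + (Ml l).2.2.2,
      (Ml l).1, (Ml l).2.1) := by
  rw [Ml_cons]; obtain ⟨k,b,c,d⟩ := Ml l; simp [tmul]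

lemma Ml_concat_expl (l : List ℕ) (a : ℕ) :
    Ml (l ++ [a]) = (a * (Ml l).1 + (Ml l).2.1, (Ml l).1,
      a * (Ml l).2.2.1 + (Ml l).2.2.2, (Ml l).2.2.1) := by
  rw [Ml_concat]; obtain ⟨k,b,c,d⟩ := Ml l; simp [tmul, Nat.mul_comm]

lemma Ml_reverse (l : List ℕ) :
    Ml l.reverse = ((Ml l).1, (Ml l).2.2.1, (Ml l).2.1, (Ml l).2.2.2) := by
  induction l with
  | nil => rfl
  | cons a l ih =>
      rw [List.reverse_cons, Ml_concat_expl, ih, Ml_cons_expl]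

lemma Ml_det (l : List ℕ) :
    ((Ml l).1 : ℤ) * (Ml l).2.2.2 - (Ml l).2.1 * (Ml l).2.2.1 = (-1) ^ l.length := by
  induction l with
  | nil => simp [Ml_nil]
  | cons a l ih =>
      rw [Ml_cons_expl]
      simp only [List.length_cons, pow_succ]
      push_cast
      nlinarith [ih]

lemma convDen_eq_Ml (l : List ℕ) :
    l.foldl (fun pr a => (a * pr.1 + pr.2, pr.1)) ((1 : ℕ), (0 : ℕ))
      = ((Ml l).1, (Ml l).2.1) := by
  induction l using List.reverseRecOn with
  | nil => rfl
  | append_singleton l a ih =>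
      rw [List.foldl_append, ih, Ml_concat_expl]
      simp

lemma convDen_eq (l : List ℕ) : convDen l = (Ml l).1 := by
  rw [convDen, convDen_eq_Ml]

/-! ### positivity facts -/

lemma Ml_k_pos (l : List ℕ) (h : ∀ x ∈ l, 1 ≤ x) : 1 ≤ (Ml l).1 := by
  induction l with
  | nil => simp [Ml_nil]
  | cons a l ih =>
      rw [Ml_cons_expl]
      have ha : 1 ≤ a := h a (List.mem_cons_self (a := a) (l := l))
      have := ih (fun x hx => h x (List.mem_cons_of_mem a hx))
      simp only
      calc 1 ≤ (Ml l).1 := this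
        _ ≤ a * (Ml l).1 := Nat.le_mul_of_pos_left _ ha
        _ ≤ _ := Nat.le_add_right _ _

lemma Ml_b_pos (l : List ℕ) (h : ∀ x ∈ l, 1 ≤ x) (hne : l ≠ []) : 1 ≤ (Ml l).2.1 := by
  induction l using List.reverseRecOn with
  | nil => simp at hne
  | append_singleton l a _ =>
      rw [Ml_concat_expl]
      exact Ml_k_pos l (fun x hx => h x (List.mem_append_left _ hx))

lemma Ml_two_b_le_k (l : List ℕ) (h : ∀ x ∈ l, 1 ≤ x) (hne : l ≠ [])
    (hlast : 2 ≤ l.getLast hne) : 2 * (Ml l).2.1 ≤ (Ml l).1 := by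
  have hdecomp := List.dropLast_append_getLast hne
  set l' := l.dropLast with hl'
  set a := l.getLast hne with ha
  rw [← hdecomp, Ml_concat_expl]
  simp only
  calc 2 * (Ml l').1 ≤ a * (Ml l').1 := Nat.mul_le_mul_right _ hlast
    _ ≤ _ := Nat.le_add_right _ _

lemma cfValQ_eq_Ml (l : List ℕ) (h : ∀ x ∈ l, 1 ≤ x) :
    cfValQ l = ((Ml l).2.2.1 : ℚ) / (Ml l).1 := by
  induction l with
  | nil => simp [cfValQ, Ml_nil]
  | cons a l ih =>
      have hk : (0:ℚ) < (Ml l).1 := by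
        exact_mod_cast Ml_k_pos l (fun x hx => h x (List.mem_cons_of_mem a hx))
      have hknum : (0:ℚ) < a * (Ml l).1 + (Ml l).2.2.1 := by
        have ha : 1 ≤ a := h a (List.mem_cons_self (a := a) (l := l))
        have : (1:ℚ) ≤ a := by exact_mod_cast ha
        have hc : (0:ℚ) ≤ ((Ml l).2.2.1 : ℚ) := by positivity
        nlinarith
      rw [cfValQ, ih (fun x hx => h x (List.mem_cons_of_mem a hx)), Ml_cons_expl]
      push_cast
      have ha : (1:ℚ) ≤ a := by exact_mod_cast h a (List.mem_cons_self (a := a) (l := l))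
      have h2 : (0:ℚ) < (a:ℚ) + (Ml l).2.2.1 / (Ml l).1 := by
        have hc : (0:ℚ) ≤ ((Ml l).2.2.1 : ℚ) / (Ml l).1 := by positivity
        linarith
      rw [div_eq_div_iff h2.ne' hknum.ne']
      field_simp

lemma Ml_coprime_aux {g : ℕ} (l : List ℕ) (h1 : (g:ℤ) ∣ (-1) ^ l.length) : g = 1 := by
  have hu : IsUnit ((-1 : ℤ) ^ l.length) := (isUnit_one.neg).pow _
  have := isUnit_of_dvd_unit h1 hu
  rcases Int.isUnit_iff.1 this with h | h
  · exact_mod_cast h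
  · have : (0:ℤ) ≤ g := Int.natCast_nonneg g
    omega

lemma Ml_coprime_k_c (l : List ℕ) : Nat.Coprime (Ml l).1 (Ml l).2.2.1 := by
  set g := Nat.gcd (Ml l).1 (Ml l).2.2.1 with hg
  have hdet := Ml_det l
  have h1 : (g:ℤ) ∣ (-1) ^ l.length := by
    rw [← hdet]
    exact dvd_sub
      (dvd_mul_of_dvd_left (Int.natCast_dvd_natCast.2 (Nat.gcd_dvd_left _ _)) _)
      (Dvd.dvd.mul_left (Int.natCast_dvd_natCast.2 (Nat.gcd_dvd_right _ _)) _)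
  exact Ml_coprime_aux l h1

lemma Ml_coprime_k_b (l : List ℕ) : Nat.Coprime (Ml l).1 (Ml l).2.1 := by
  set g := Nat.gcd (Ml l).1 (Ml l).2.1 with hg
  have hdet := Ml_det l
  have h1 : (g:ℤ) ∣ (-1) ^ l.length := by
    rw [← hdet]
    exact dvd_sub
      (dvd_mul_of_dvd_left (Int.natCast_dvd_natCast.2 (Nat.gcd_dvd_left _ _)) _)
      (dvd_mul_of_dvd_left (Int.natCast_dvd_natCast.2 (Nat.gcd_dvd_right _ _)) _)
  exact Ml_coprime_aux l h1

/-! ### value range and uniqueness of canonical CFs -/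

def CanL (l : List ℕ) : Prop :=
  (∀ x ∈ l, 1 ≤ x) ∧ (∀ x, l.getLast? = some x → 2 ≤ x)

lemma cfValQ_nonneg (l : List ℕ) (h : ∀ x ∈ l, 1 ≤ x) : 0 ≤ cfValQ l := by
  induction l with
  | nil => simp [cfValQ]
  | cons a l ih =>
      have ha : (1:ℚ) ≤ a := by exact_mod_cast h a (List.mem_cons_self (a := a) (l := l))
      have hv := ih (fun x hx => h x (List.mem_cons_of_mem a hx))
      rw [cfValQ]
      positivity

lemma cfValQ_pos (l : List ℕ) (h : ∀ x ∈ l, 1 ≤ x) (hne : l ≠ []) : 0 < cfValQ l := by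
  match l with
  | a :: l =>
      have ha : (1:ℚ) ≤ a := by exact_mod_cast h a (List.mem_cons_self (a := a) (l := l))
      have hv := cfValQ_nonneg l (fun x hx => h x (List.mem_cons_of_mem a hx))
      rw [cfValQ]
      positivity

lemma CanL_tail (a : ℕ) (l : List ℕ) (h : CanL (a :: l)) : CanL l := by
  obtain ⟨h1, h2⟩ := h
  refine ⟨fun x hx => h1 x (List.mem_cons_of_mem a hx), fun x hx => h2 x ?_⟩
  cases l with
  | nil => simp at hx
  | cons b t => rwa [List.getLast?_cons_cons]

lemma cfValQ_lt_one (l : List ℕ) (h : CanL l) (hne : l ≠ []) : cfValQ l < 1 := by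
  induction l with
  | nil => simp at hne
  | cons a l ih =>
      have ha : 1 ≤ a := h.1 a (List.mem_cons_self (a := a) (l := l))
      have hv0 : 0 ≤ cfValQ l := cfValQ_nonneg l (CanL_tail a l h).1
      rw [cfValQ]
      rw [div_lt_one (by positivity)]
      rcases Nat.lt_or_ge a 2 with ha2 | ha2
      · -- a = 1, so l ≠ []
        interval_cases a
        · have hl : l ≠ [] := by
            rintro rfl
            have := h.2 1 (by simp)
            omega
          have := cfValQ_pos l (CanL_tail 1 l h).1 hl
          push_cast
          linarith
      · have : (2:ℚ) ≤ a := by exact_mod_cast ha2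
        linarith

lemma cfValQ_inj (l l' : List ℕ) (hl : CanL l) (hl' : CanL l')
    (h : cfValQ l = cfValQ l') : l = l' := by
  induction l generalizing l' with
  | nil =>
      cases l' with
      | nil => rfl
      | cons b t =>
          exfalso
          have := cfValQ_pos (b :: t) hl'.1 (by simp)
          rw [← h] at this
          simp [cfValQ] at this
  | cons a l ih =>
      cases l' with
      | nil =>
          exfalso
          have := cfValQ_pos (a :: l) hl.1 (by simp)
          rw [h] at this
          simp [cfValQ] at this
      | cons b t =>
          have hvl : 0 ≤ cfValQ l := cfValQ_nonneg l (CanL_tail a l hl).1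
          have hvt : 0 ≤ cfValQ t := cfValQ_nonneg t (CanL_tail b t hl').1
          have hvl1 : cfValQ l < 1 := by
            rcases eq_or_ne l [] with rfl | hne
            · simp [cfValQ]
            · exact cfValQ_lt_one l (CanL_tail a l hl) hne
          have hvt1 : cfValQ t < 1 := by
            rcases eq_or_ne t [] with rfl | hne
            · simp [cfValQ]
            · exact cfValQ_lt_one t (CanL_tail b t hl') hne
          have ha : (1:ℚ) ≤ a := by exact_mod_cast hl.1 a (List.mem_cons_self (a := a) (l := l))
          have hb : (1:ℚ) ≤ b := by exact_mod_cast hl'.1 b (List.mem_cons_self (a := b) (l := t))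
          rw [cfValQ, cfValQ] at h
          have hden : (a:ℚ) + cfValQ l = (b:ℚ) + cfValQ t := by
            have h1 : (0:ℚ) < (a:ℚ) + cfValQ l := by linarith
            have h2 : (0:ℚ) < (b:ℚ) + cfValQ t := by linarith
            rw [div_eq_div_iff h1.ne' h2.ne'] at h
            linarith
          have hab : a = b := by
            have hfa : ⌊(a:ℚ) + cfValQ l⌋ = (a:ℤ) := by
              rw [Int.floor_eq_iff]
              constructor <;> push_cast <;> linarith
            have hfb : ⌊(b:ℚ) + cfValQ t⌋ = (b:ℤ) := by
              rw [Int.floor_eq_iff]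
              constructor <;> push_cast <;> linarith
            have : (a:ℤ) = (b:ℤ) := by rw [← hfa, ← hfb, hden]
            exact_mod_cast this
          subst hab
          have hval : cfValQ l = cfValQ t := by linarith
          rw [ih t (CanL_tail a l hl) (CanL_tail a t hl') hval]

lemma cfList_eq_of_isCF {q : ℚ} {l : List ℕ} (h : IsCF q l) : cfList q = l := by
  rw [cfList, dif_pos ⟨l, h⟩]
  have hc := (⟨l, h⟩ : ∃ l, IsCF q l).choose_spec
  exact cfValQ_inj _ _ ⟨hc.1, hc.2.1⟩ ⟨h.1, h.2.1⟩ (hc.2.2.trans h.2.2.symm)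

/-! ### num/den of reduced fractions -/

lemma rat_num_den {c k : ℕ} (hk : 0 < k) (hco : Nat.Coprime c k) :
    ((c:ℚ)/(k:ℚ)).num = c ∧ ((c:ℚ)/(k:ℚ)).den = k := by
  have : (c:ℚ)/(k:ℚ) = Rat.mk' (c:ℤ) k (by omega) (by simpa using hco) := by
    rw [Rat.mk_eq_divInt, Rat.divInt_eq_div]
    norm_num
  rw [this]
  exact ⟨rfl, rfl⟩

/-! ### existence of the canonical expansion -/

lemma den_inv_eq {q : ℚ} (h0 : 0 < q) : (1/q).den = q.num.toNat := by
  have hnum : 0 < q.num := Rat.num_pos.2 h0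
  have habs : q.num.natAbs = q.num.toNat := by omega
  have hco : Nat.Coprime q.den q.num.toNat := by
    have := q.reduced
    rw [habs] at this
    exact this.symm
  have key : 1/q = ((q.den : ℕ) : ℚ)/(((q.num.toNat : ℕ)) : ℚ) := by
    conv_lhs => rw [← Rat.num_div_den q]
    rw [one_div_div]
    congr 1
    exact_mod_cast (Int.toNat_of_nonneg hnum.le).symm
  rw [key]
  exact (rat_num_den (by omega) hco).2

lemma den_fract_dvd (x : ℚ) : (x - (⌊x⌋ : ℚ)).den ∣ x.den := by
  have := Rat.add_den_dvd x (-(⌊x⌋ : ℚ))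
  simpa [sub_eq_add_neg] using this

def cfOfF : ℕ → ℚ → List ℕ
  | 0, _ => []
  | n+1, q => if q = 0 then [] else (⌊1/q⌋).toNat :: cfOfF n (1/q - (⌊1/q⌋ : ℚ))

lemma cfOfF_spec : ∀ n : ℕ, ∀ q : ℚ, 0 < q → q < 1 → q.den ≤ n → IsCF q (cfOfF n q) := by
  intro n
  induction n with
  | zero => intro q h0 _ hden; have := q.pos; omega
  | succ n ih =>
      intro q h0 h1 hden
      have hq0 : q ≠ 0 := h0.ne'
      have hx1 : 1 < 1/q := by
        rw [lt_div_iff₀ h0]; linarith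
      have ha1 : 1 ≤ ⌊1/q⌋ := Int.le_floor.2 (by exact_mod_cast hx1.le)
      set r := 1/q - (⌊1/q⌋ : ℚ) with hr
      have hr0 : 0 ≤ r := by
        rw [hr]; have := Int.floor_le (1/q); linarith
      have hr1 : r < 1 := by
        rw [hr]; have := Int.lt_floor_add_one (1/q); linarith
      have htn : ((⌊1/q⌋).toNat : ℚ) = ((⌊1/q⌋ : ℤ) : ℚ) := by
        exact_mod_cast Int.toNat_of_nonneg (by omega)
      have hsum : ((⌊1/q⌋).toNat : ℚ) + r = 1/q := by
        rw [hr, htn]; ring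
      have hval_eq : ∀ v : ℚ, v = r → (1 : ℚ) / (((⌊1/q⌋).toNat : ℚ) + v) = q := by
        intro v hv
        rw [hv, hsum, one_div_one_div]
      rw [cfOfF, if_neg hq0, ← hr]
      rcases eq_or_lt_of_le hr0 with hrz | hrpos
      · -- r = 0, exact case
        have hrz' : r = 0 := hrz.symm
        have hcf0 : cfOfF n r = [] := by
          cases n <;> simp [cfOfF, hr, ← hrz']
        rw [hcf0]
        have ha2 : 2 ≤ (⌊1/q⌋).toNat := by
          by_contra hcon
          have : ⌊1/q⌋ = 1 := by omega
          rw [hr, this] at hrz'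
          have : (1:ℚ)/q = 1 := by push_cast at hrz' ⊢; linarith
          rw [this] at hx1
          exact lt_irrefl _ hx1
        refine ⟨?_, ?_, ?_⟩
        · intro x hx; simp only [List.mem_singleton] at hx; omega
        · intro x hx; simp only [List.getLast?_singleton, Option.some.injEq] at hx; omega
        · rw [cfValQ, cfValQ, add_zero]
          have := hval_eq 0 hrz'.symm
          rwa [add_zero] at this
      · -- recursive case
        have hrden : r.den ≤ n := by
          have h2 : r.den ∣ (1/q).den := den_fract_dvd (1/q)
          have h3 : (1/q).den = q.num.toNat := den_inv_eq h0
          have h4 : q.num < q.den := by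
            have hden' : (0:ℚ) < (q.den:ℚ) := by exact_mod_cast q.pos
            have := h1
            rw [← Rat.num_div_den q, div_lt_one hden'] at this
            exact_mod_cast this
          have h5 : r.den ≤ (1/q).den := Nat.le_of_dvd (Rat.pos _) h2
          have hnum : 0 < q.num := Rat.num_pos.2 h0
          omega
        obtain ⟨hpos, hlast, hval⟩ := ih r hrpos hr1 hrden
        have hne : cfOfF n r ≠ [] := by
          intro hcon
          rw [hcon] at hval
          simp [cfValQ] at hval
          exact hrpos.ne hval
        refine ⟨?_, ?_, ?_⟩
        · intro x hx
          rcases List.mem_cons.1 hx with rfl | hx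
          · omega
          · exact hpos x hx
        · intro x hx
          obtain ⟨b, t, hbt⟩ := List.exists_cons_of_ne_nil hne
          rw [hbt, List.getLast?_cons_cons] at hx
          exact hlast x (by rw [hbt]; exact hx)
        · rw [cfValQ, hval]
          exact hval_eq r rfl

lemma isCF_cfList {q : ℚ} (h0 : 0 < q) (h1 : q < 1) : IsCF q (cfList q) := by
  have h := cfOfF_spec q.den q h0 h1 le_rfl
  rw [cfList_eq_of_isCF h]
  exact h

/-! ### main setup -/

lemma mem_Zstar_iff {N a : ℕ} : a ∈ Zstar N ↔ (1 ≤ a ∧ a ≤ N ∧ Nat.Coprime a N) := by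
  simp [Zstar, Finset.mem_filter, Finset.mem_Icc, and_assoc]

lemma setup (N a : ℕ) (hN : 3 ≤ N) (haZ : a ∈ Zstar N) (h2a : 2*a ≤ N) :
    ∃ l : List ℕ, cfList ((a:ℚ)/N) = l ∧ IsCF ((a:ℚ)/N) l ∧ l ≠ [] ∧
      (Ml l).1 = N ∧ (Ml l).2.2.1 = a ∧ starMap N a = (Ml l).2.1 ∧
      starMap N a ∈ Zstar N ∧ 2 * starMap N a ≤ N ∧
      cfList ((starMap N a : ℚ)/N) = l.reverse := by
  obtain ⟨ha1, haN, hco⟩ := mem_Zstar_iff.1 haZ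
  have hN0 : (0:ℚ) < (N:ℚ) := by exact_mod_cast (by omega : 0 < N)
  have haN' : a < N := by omega
  have hq0 : 0 < (a:ℚ)/N := by
    apply div_pos (by exact_mod_cast (by omega : 0 < a)) hN0
  have hq1 : (a:ℚ)/N < 1 := by
    rw [div_lt_one hN0]; exact_mod_cast haN'
  set l := cfList ((a:ℚ)/N) with hl
  have hIs : IsCF ((a:ℚ)/N) l := isCF_cfList hq0 hq1
  obtain ⟨hpos, hlast, hval⟩ := hIs
  have hne : l ≠ [] := by
    intro hcon
    rw [hcon] at hval
    simp [cfValQ] at hval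
    exact hq0.ne' hval.symm
  -- identify k = N, c = a
  have hvalMl : ((Ml l).2.2.1 : ℚ)/((Ml l).1 : ℚ) = (a:ℚ)/N := by
    rw [← cfValQ_eq_Ml l hpos]; exact hval
  have hkpos : 0 < (Ml l).1 := Ml_k_pos l hpos
  have hnd1 := rat_num_den hkpos (Ml_coprime_k_c l).symm
  have hnd2 := rat_num_den (by omega : 0 < N) hco
  have hkN : (Ml l).1 = N := by
    have := hnd1.2; rw [hvalMl, hnd2.2] at this; omega
  have hca : (Ml l).2.2.1 = a := by
    have := hnd1.1; rw [hvalMl, hnd2.1] at this; exact_mod_cast this.symm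
  -- head of l is ≥ 2
  have hhead : ∀ x, l.head? = some x → 2 ≤ x := by
    intro x hx
    obtain ⟨y, t, ht⟩ := List.exists_cons_of_ne_nil hne
    rw [ht, List.head?_cons] at hx
    obtain rfl : x = y := by injection hx with h; exact h.symm

    by_contra hcon
    have hx1 : x = 1 := by
      have := hpos x (by rw [ht]; exact List.mem_cons_self (a := x) (l := t))
      omega
    have hvt0 : 0 ≤ cfValQ t := cfValQ_nonneg t (fun y hy => hpos y (by rw [ht]; exact List.mem_cons_of_mem x hy))
    have hvt1 : cfValQ t < 1 := by
      rcases eq_or_ne t [] with rfl | htne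
      · simp [cfValQ]
      · exact cfValQ_lt_one t (CanL_tail x t (by rw [← ht]; exact ⟨hpos, hlast⟩)) htne
    have hhalf : (a:ℚ)/N ≤ 1/2 := by
      rw [div_le_div_iff₀ hN0 (by norm_num)]
      have h2aQ : ((2*a : ℕ):ℚ) ≤ ((N:ℕ):ℚ) := by exact_mod_cast h2a
      push_cast at h2aQ ⊢
      linarith
    have : cfValQ l = 1/((x:ℚ) + cfValQ t) := by rw [ht, cfValQ]
    rw [this, hx1] at hval
    have hd0 : (0:ℚ) < 1 + cfValQ t := by linarith
    have : (1:ℚ)/(1 + cfValQ t) > 1/2 := by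
      rw [gt_iff_lt, div_lt_div_iff₀ (by norm_num) hd0]
      linarith
    push_cast at hval
    rw [hval] at this
    linarith
  -- the reversed list
  have hCanRev : CanL l.reverse := by
    constructor
    · intro x hx; exact hpos x (List.mem_reverse.1 hx)
    · intro x hx
      rw [List.getLast?_reverse] at hx
      exact hhead x hx
  have hvalRev : cfValQ l.reverse = ((Ml l).2.1 : ℚ)/(N : ℚ) := by
    rw [cfValQ_eq_Ml l.reverse hCanRev.1, Ml_reverse, ← hkN]
  -- starMap value
  have hb1 : 1 ≤ (Ml l).2.1 := Ml_b_pos l hpos hne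
  have hstar : starMap N a = (Ml l).2.1 := by
    have hdef : starMap N a = (((N : ℚ) * cfValQ ((cfList ((a : ℚ) / N)).reverse)).num).toNat := rfl
    rw [hdef, ← hl, hvalRev]
    have : (N:ℚ) * ((((Ml l).2.1 : ℕ) : ℚ)/(N:ℚ)) = (((Ml l).2.1 : ℕ) : ℚ) := by
      field_simp
    rw [this, Rat.num_natCast, Int.toNat_natCast]
  have h2b : 2 * (Ml l).2.1 ≤ N := by
    rw [← hkN]
    exact Ml_two_b_le_k l hpos hne (hlast _ (by rw [List.getLast?_eq_getLast hne]))
  have hcob : Nat.Coprime ((Ml l).2.1) N := by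
    rw [← hkN]; exact (Ml_coprime_k_b l).symm
  have hbZ : starMap N a ∈ Zstar N := by
    rw [hstar, mem_Zstar_iff]
    exact ⟨hb1, by omega, hcob⟩
  -- cfList of star
  have hIsRev : IsCF ((starMap N a : ℚ)/N) l.reverse := by
    refine ⟨hCanRev.1, hCanRev.2, ?_⟩
    rw [hvalRev, hstar]
  have hclRev : cfList ((starMap N a : ℚ)/N) = l.reverse := cfList_eq_of_isCF hIsRev
  exact ⟨l, rfl, ⟨hpos, hlast, hval⟩, hne, hkN, hca, hstar, hbZ, by rw [hstar]; exact h2b, hclRev⟩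

/-! ### auxiliary for part 3 -/

lemma rev_take (l : List ℕ) (m : ℕ) :
    l.reverse.take (l.length - m) = (l.drop m).reverse := by
  have hdec : l.reverse = (l.drop m).reverse ++ (l.take m).reverse := by
    rw [← List.reverse_append, List.take_append_drop]
  have hlen : (l.drop m).reverse.length = l.length - m := by simp
  rw [hdec, ← hlen, List.take_left]

lemma qdenZ_of_nonneg (l : List ℕ) (j : ℤ) (h : 0 ≤ j) :
    qdenZ l j = ((Ml (l.take j.toNat)).1 : ℤ) := by
  rw [qdenZ, if_neg (by omega), convDen_eq]

theorem stmt18 (N : ℕ) (hN : 3 ≤ N) :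
    (∀ a, a ∈ Zstar N → 2 * a ≤ N →
        ((starMap N a : ℚ) / N = cfValQ ((cfList ((a : ℚ) / N)).reverse))) ∧
    Set.BijOn (starMap N) {a | a ∈ Zstar N ∧ 2 * a ≤ N} {a | a ∈ Zstar N ∧ 2 * a ≤ N} ∧
    (∀ a, a ∈ Zstar N → 2 * a ≤ N →
      ∀ i : ℤ, 1 ≤ i → i ≤ ((cfList ((a : ℚ) / N)).length : ℤ) →
        qdenZ (cfList ((a : ℚ) / N)) i *
            qdenZ (cfList ((starMap N a : ℚ) / N)) (((cfList ((a : ℚ) / N)).length : ℤ) - i) +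
          qdenZ (cfList ((a : ℚ) / N)) (i - 1) *
            qdenZ (cfList ((starMap N a : ℚ) / N))
              (((cfList ((a : ℚ) / N)).length : ℤ) - i - 1) = (N : ℤ)) := by
  have hN0 : (0:ℚ) < (N:ℚ) := by exact_mod_cast (by omega : 0 < N)
  refine ⟨?_, ?_, ?_⟩
  · -- part 1
    intro a haZ h2a
    obtain ⟨l, hcl, hIs, hne, hkN, hca, hstar, hbZ, h2b, hclRev⟩ := setup N a hN haZ h2a
    obtain ⟨hb1, hbN, hcob⟩ := mem_Zstar_iff.1 hbZ
    have hq0 : 0 < ((starMap N a : ℚ))/N :=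
      div_pos (by exact_mod_cast (by omega : 0 < starMap N a)) hN0
    have hq1 : ((starMap N a : ℚ))/N < 1 := by
      rw [div_lt_one hN0]
      exact_mod_cast (by omega : starMap N a < N)
    have h := isCF_cfList hq0 hq1
    rw [hclRev] at h
    rw [hcl]
    exact h.2.2.symm
  · -- part 2
    have hmaps : Set.MapsTo (starMap N) {a | a ∈ Zstar N ∧ 2 * a ≤ N}
        {a | a ∈ Zstar N ∧ 2 * a ≤ N} := by
      intro a ha
      obtain ⟨l, hcl, hIs, hne, hkN, hca, hstar, hbZ, h2b, hclRev⟩ := setup N a hN ha.1 ha.2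
      exact ⟨hbZ, h2b⟩
    have hinv : ∀ a ∈ {a | a ∈ Zstar N ∧ 2 * a ≤ N}, starMap N (starMap N a) = a := by
      intro a ha
      obtain ⟨l, hcl, hIs, hne, hkN, hca, hstar, hbZ, h2b, hclRev⟩ := setup N a hN ha.1 ha.2
      obtain ⟨l2, hcl2, _, _, _, _, hstar2, _, _, _⟩ := setup N (starMap N a) hN hbZ h2b
      have hl2 : l2 = l.reverse := by rw [← hcl2, hclRev]
      rw [hstar2, hl2, Ml_reverse]
      exact hca
    exact Set.InvOn.bijOn ⟨fun x hx => hinv x hx, fun x hx => hinv x hx⟩ hmaps hmaps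
  · -- part 3
    intro a haZ h2a i hi1 hi2
    obtain ⟨l, hcl, hIs, hne, hkN, hca, hstar, hbZ, h2b, hclRev⟩ := setup N a hN haZ h2a
    rw [hcl] at hi2 ⊢
    rw [hclRev]
    set j := i.toNat with hj
    have hji : (j:ℤ) = i := Int.toNat_of_nonneg (by omega)
    have hj1 : 1 ≤ j := by omega
    have hjlen : j ≤ l.length := by
      have : i ≤ (l.length : ℤ) := hi2
      omega
    have hTD : l.take j ++ l.drop j = l := List.take_append_drop j l
    have hMl : Ml l = tmul (Ml (l.take j)) (Ml (l.drop j)) := by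
      rw [← Ml_append, hTD]
    have hNsplit : N = (Ml (l.take j)).1 * (Ml (l.drop j)).1
        + (Ml (l.take j)).2.1 * (Ml (l.drop j)).2.2.1 := by
      rw [← hkN, hMl]; rfl
    -- evaluation 1
    have e1 : qdenZ l i = ((Ml (l.take j)).1 : ℤ) := by
      rw [qdenZ_of_nonneg l i (by omega), hj]
    -- evaluation 2
    have hj1lt : j - 1 < l.length := by omega
    have htk : l.take j = l.take (j-1) ++ [l[j-1]'hj1lt] := by
      conv_lhs => rw [show j = (j - 1) + 1 by omega]
      rw [List.take_succ, List.getElem?_eq_getElem hj1lt]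
      simp
    have e2 : qdenZ l (i - 1) = ((Ml (l.take j)).2.1 : ℤ) := by
      rw [qdenZ_of_nonneg l (i-1) (by omega)]
      have h1 : (i-1).toNat = j - 1 := by omega
      rw [h1, htk, Ml_concat_expl]
    have e3 : qdenZ l.reverse ((l.length : ℤ) - i) = ((Ml (l.drop j)).1 : ℤ) := by
      rw [qdenZ_of_nonneg _ _ (by omega)]
      have h1 : ((l.length : ℤ) - i).toNat = l.length - j := by omega
      rw [h1, rev_take, Ml_reverse]
    rcases eq_or_lt_of_le hjlen with hjeq | hjlt
    · -- j = length
      have hdrop : l.drop j = [] := by rw [hjeq, List.drop_length]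
      have e4 : qdenZ l.reverse ((l.length:ℤ) - i - 1) = 0 := by
        rw [qdenZ, if_pos (by omega)]
      rw [e1, e2, e3, e4, hdrop]
      rw [hdrop] at hNsplit
      simp only [Ml_nil] at hNsplit ⊢
      push_cast
      omega
    · -- j < length
      have e4 : qdenZ l.reverse ((l.length:ℤ) - i - 1) = ((Ml (l.drop j)).2.2.1 : ℤ) := by
        rw [qdenZ_of_nonneg _ _ (by omega)]
        have h1 : ((l.length:ℤ) - i - 1).toNat = l.length - (j+1) := by omega
        rw [h1, rev_take, Ml_reverse, List.drop_eq_getElem_cons hjlt, Ml_cons_expl]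
      rw [e1, e2, e3, e4]
      exact_mod_cast hNsplit.symm
end
end

section
/- Let N ≥ 3 be an integer and let a ∈ Z_N^* with a > N/2 and canonical continued fraction expansion a/N = [0; a_1, a_2, …, a_r] (so that a_1 = 1). Define a* by a*/N = [0; 1, a_r − 1, a_{r−1}, a_{r−2}, …, a_3, a_2 + 1]. Then the map a ↦ a* is a bijection from { a ∈ Z_N^* : a > N/2 } onto itself. -/
open scoped BigOperators
open MeasureTheory

attribute [local instance] Classical.propDecidable

noncomputable section

/-- Increment the first entry of a list. -/
def incHead : List ℕ → List ℕ
  | [] => []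
  | a :: l => (a + 1) :: l

/-- For `l = [a_1, a_2, ..., a_r]` (with `a_1 = 1`), produce the list
`[1, a_r - 1, a_{r-1}, ..., a_3, a_2 + 1]`. -/
def flipList (l : List ℕ) : List ℕ :=
  match (incHead l.tail).reverse with
  | [] => []
  | a :: rest => 1 :: (a - 1) :: rest

/-- The map `a ↦ a*`, where `a*/N = [0; 1, a_r - 1, a_{r-1}, ..., a_3, a_2 + 1]` for
`a/N = [0; a_1, a_2, ..., a_r]` with `a_1 = 1`. -/
def starMap' (N a : ℕ) : ℕ :=
  (((N : ℚ) * cfValQ (flipList (cfList ((a : ℚ) / N)))).num).toNat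

namespace CFAux
open Matrix

def cont : List ℕ → ℕ × ℕ
  | [] => (0, 1)
  | a :: m => ((cont m).2, a * (cont m).2 + (cont m).1)

lemma cont_nil : cont [] = (0, 1) := rfl
lemma cont_cons (a : ℕ) (m : List ℕ) :
    cont (a :: m) = ((cont m).2, a * (cont m).2 + (cont m).1) := rfl

def mA (a : ℕ) : Matrix (Fin 2) (Fin 2) ℕ := !![a, 1; 1, 0]

lemma mA_symm (a : ℕ) : (mA a)ᵀ = mA a := by
  ext i j; fin_cases i <;> fin_cases j <;> simp [mA]

lemma prod_entries (l : List ℕ) :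
    (l.map mA).prod 0 0 = (cont l).2 ∧ (l.map mA).prod 1 0 = (cont l).1 := by
  induction l with
  | nil => simp [cont]
  | cons a m ih =>
    simp only [List.map_cons, List.prod_cons, cont_cons]
    constructor <;>
    · rw [Matrix.mul_apply, Fin.sum_univ_two]
      simp [mA, ih.1, ih.2]

lemma cont_den_reverse (l : List ℕ) : (cont l.reverse).2 = (cont l).2 := by
  have ht := Matrix.transpose_list_prod (l.map mA)
  have hmap : (l.map mA).map Matrix.transpose = l.map mA := by
    simp [List.map_map, Function.comp_def, mA_symm]
  rw [hmap] at ht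
  have h1 := (prod_entries l).1
  have h2 := (prod_entries l.reverse).1
  rw [List.map_reverse] at h2
  rw [← h1, ← h2, ← ht]
  rfl

lemma cont_coprime (l : List ℕ) : Nat.Coprime (cont l).1 (cont l).2 := by
  induction l with
  | nil => simp [cont]
  | cons a m ih =>
    simp only [cont_cons]
    have h := ih.symm
    have := (Nat.coprime_add_mul_left_right (cont m).2 (cont m).1 a).mpr h
    simpa [Nat.add_comm, Nat.mul_comm] using this

lemma cont_den_pos (l : List ℕ) (h : ∀ x ∈ l, 1 ≤ x) : 0 < (cont l).2 := by
  induction l with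
  | nil => simp [cont]
  | cons a m ih =>
    simp only [cont_cons]
    have ha : 1 ≤ a := h a (by simp)
    have := ih (fun x hx => h x (by simp [hx]))
    nlinarith

lemma cfValQ_nonneg_le_one (l : List ℕ) (h : ∀ x ∈ l, 1 ≤ x) :
    0 ≤ cfValQ l ∧ cfValQ l ≤ 1 := by
  induction l with
  | nil => simp [cfValQ]
  | cons a m ih =>
    obtain ⟨h0, h1⟩ := ih (fun x hx => h x (by simp [hx]))
    have ha : (1 : ℚ) ≤ a := by exact_mod_cast h a (by simp)
    have hpos : 0 < (a : ℚ) + cfValQ m := by linarith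
    constructor
    · simp only [cfValQ]; positivity
    · simp only [cfValQ]
      rw [div_le_one hpos]; linarith

lemma cfValQ_pos (a : ℕ) (m : List ℕ) (h : ∀ x ∈ a :: m, 1 ≤ x) :
    0 < cfValQ (a :: m) := by
  obtain ⟨h0, _⟩ := cfValQ_nonneg_le_one m (fun x hx => h x (by simp [hx]))
  have ha : (1 : ℚ) ≤ a := by exact_mod_cast h a (by simp)
  simp only [cfValQ]
  positivity

lemma cfValQ_eq_div (l : List ℕ) (h : ∀ x ∈ l, 1 ≤ x) :
    cfValQ l = ((cont l).1 : ℚ) / ((cont l).2 : ℚ) := by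
  induction l with
  | nil => simp [cfValQ, cont]
  | cons a m ih =>
    have hm : ∀ x ∈ m, 1 ≤ x := fun x hx => h x (by simp [hx])
    have hq : 0 < (cont m).2 := cont_den_pos m hm
    have hq' : (0:ℚ) < ((cont m).2 : ℚ) := by exact_mod_cast hq
    have ha : 1 ≤ a := h a (by simp)
    have hd : (0:ℚ) < (a : ℚ) * (cont m).2 + (cont m).1 := by
      have : (1:ℚ) ≤ (a:ℚ) := by exact_mod_cast ha
      have hp : (0:ℚ) ≤ ((cont m).1 : ℚ) := by positivity
      nlinarith
    simp only [cfValQ, cont_cons, ih hm]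
    push_cast
    have hd1 : (0:ℚ) < (a : ℚ) + ((cont m).1 : ℚ) / ((cont m).2 : ℚ) := by
      have : (1:ℚ) ≤ (a:ℚ) := by exact_mod_cast ha
      have hp : (0:ℚ) ≤ ((cont m).1 : ℚ) / ((cont m).2 : ℚ) := by positivity
      linarith
    rw [div_eq_div_iff hd1.ne' hd.ne']
    field_simp

lemma cfValQ_num_den (l : List ℕ) (h : ∀ x ∈ l, 1 ≤ x) :
    (cfValQ l).num = (cont l).1 ∧ (cfValQ l).den = (cont l).2 := by
  have hq := cont_den_pos l h
  have hcop := cont_coprime l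
  have h1 : ((((cont l).1 : ℤ) : ℚ) / (((cont l).2 : ℤ) : ℚ)).num = ((cont l).1 : ℤ) :=
    Rat.num_div_eq_of_coprime (by exact_mod_cast hq) (by simpa using hcop)
  have h2 : (((((cont l).1 : ℤ) : ℚ) / (((cont l).2 : ℤ) : ℚ)).den : ℤ) = ((cont l).2 : ℤ) :=
    Rat.den_div_eq_of_coprime (by exact_mod_cast hq) (by simpa using hcop)
  have hrw : ((cont l).1 : ℚ) / ((cont l).2 : ℚ)
      = (((cont l).1 : ℤ) : ℚ) / (((cont l).2 : ℤ) : ℚ) := by push_cast; ring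
  rw [cfValQ_eq_div l h, hrw]
  constructor
  · exact_mod_cast h1
  · exact_mod_cast h2


lemma last_tail {a : ℕ} {m : List ℕ} (h : ∀ x, (a :: m).getLast? = some x → 2 ≤ x) :
    ∀ x, m.getLast? = some x → 2 ≤ x := by
  intro x hx
  apply h
  cases m with
  | nil => simp at hx
  | cons b m2 => rw [List.getLast?_cons_cons]; exact hx

lemma cfValQ_lt_one {l : List ℕ} (h1 : ∀ x ∈ l, 1 ≤ x)
    (h2 : ∀ x, l.getLast? = some x → 2 ≤ x) : cfValQ l < 1 := by
  cases l with
  | nil => simp [cfValQ]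
  | cons a m =>
    have hone : (1:ℚ) < (a : ℚ) + cfValQ m := by
      cases m with
      | nil =>
        have ha : 2 ≤ a := h2 a (by simp)
        have : (2:ℚ) ≤ (a:ℚ) := by exact_mod_cast ha
        simp [cfValQ]; linarith
      | cons b m2 =>
        have hv : 0 < cfValQ (b :: m2) :=
          cfValQ_pos b m2 (fun x hx => h1 x (by simp at hx ⊢; tauto))
        have ha : (1:ℚ) ≤ (a:ℚ) := by exact_mod_cast h1 a (by simp)
        linarith
    simp only [cfValQ]
    rw [div_lt_one (by linarith)]
    linarith

lemma isCF_unique {q : ℚ} {l l' : List ℕ} (h : IsCF q l) (h' : IsCF q l') : l = l' := by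
  induction l generalizing q l' with
  | nil =>
    cases l' with
    | nil => rfl
    | cons a' m' =>
      exfalso
      have := cfValQ_pos a' m' h'.1
      have h0 : cfValQ ([] : List ℕ) = q := h.2.2
      simp [cfValQ] at h0
      rw [h'.2.2] at this
      linarith
  | cons a m ih =>
    cases l' with
    | nil =>
      exfalso
      have := cfValQ_pos a m h.1
      have h0 : cfValQ ([] : List ℕ) = q := h'.2.2
      simp [cfValQ] at h0
      rw [h.2.2] at this; linarith
    | cons a' m' =>
      have hm1 : ∀ x ∈ m, 1 ≤ x := fun x hx => h.1 x (by simp [hx])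
      have hm1' : ∀ x ∈ m', 1 ≤ x := fun x hx => h'.1 x (by simp [hx])
      have hm2 := last_tail h.2.1
      have hm2' := last_tail h'.2.1
      have hv0 := (cfValQ_nonneg_le_one m hm1).1
      have hv0' := (cfValQ_nonneg_le_one m' hm1').1
      have hv1 : cfValQ m < 1 := cfValQ_lt_one hm1 hm2
      have hv1' : cfValQ m' < 1 := cfValQ_lt_one hm1' hm2'
      have ha : (1:ℚ) ≤ (a:ℚ) := by exact_mod_cast h.1 a (by simp)
      have ha' : (1:ℚ) ≤ (a':ℚ) := by exact_mod_cast h'.1 a' (by simp)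
      have heq : (a : ℚ) + cfValQ m = (a' : ℚ) + cfValQ m' := by
        have e1 := h.2.2
        have e2 := h'.2.2
        simp only [cfValQ] at e1 e2
        rw [← e2] at e1
        rw [one_div, one_div] at e1
        exact inv_injective e1
      have haa : a = a' := by
        rcases Nat.lt_trichotomy a a' with hlt | heq' | hgt
        · exfalso
          have : (a:ℚ) + 1 ≤ (a':ℚ) := by exact_mod_cast Nat.succ_le_of_lt hlt
          linarith
        · exact heq'
        · exfalso
          have : (a':ℚ) + 1 ≤ (a:ℚ) := by exact_mod_cast Nat.succ_le_of_lt hgt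
          linarith
      subst haa
      have hvv : cfValQ m = cfValQ m' := by
        have : (a:ℚ) = (a:ℚ) := rfl
        linarith [heq]
      have : m = m' := ih ⟨hm1, hm2, rfl⟩ ⟨hm1', hm2', hvv.symm⟩
      rw [this]

lemma exists_isCF_aux : ∀ n : ℕ, ∀ q : ℚ, q.num.toNat ≤ n → 0 < q → q < 1 → ∃ l, IsCF q l := by
  intro n
  induction n using Nat.strong_induction_on with
  | _ n ih =>
    intro q hqn h0 h1
    have hnum : 0 < q.num := Rat.num_pos.mpr h0
    have hden : 0 < q.den := q.pos
    set nu : ℕ := q.num.toNat with hnu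
    have hnuc : (nu : ℤ) = q.num := Int.toNat_of_nonneg hnum.le
    have hnup : 0 < nu := by omega
    have hlt : nu < q.den := by
      have := Rat.lt_one_iff_num_lt_denom.mpr h1
      omega
    have hcop : Nat.Coprime nu q.den := by
      have := q.reduced
      rwa [← hnuc, Int.natAbs_natCast] at this
    have hqeq : q = (nu : ℚ) / (q.den : ℚ) := by
      have h := Rat.num_div_den q
      rw [← hnuc] at h
      push_cast at h
      exact h.symm
    set s : ℕ := q.den % nu with hs
    set a : ℕ := q.den / nu with haa
    have hdiv : nu * a + s = q.den := Nat.div_add_mod q.den nu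
    by_cases hs0 : s = 0
    · have hdvd : nu ∣ q.den := Nat.dvd_of_mod_eq_zero hs0
      have hnu1 : nu = 1 := by
        have h := Nat.dvd_gcd (dvd_refl nu) hdvd
        rw [hcop.gcd_eq_one] at h
        exact Nat.dvd_one.mp h
      refine ⟨[q.den], ⟨?_, ?_, ?_⟩⟩
      · intro x hx; simp at hx; omega
      · intro x hx; simp at hx; omega
      · simp only [cfValQ]
        rw [hqeq, hnu1]
        norm_num
    · have hslt : s < nu := Nat.mod_lt _ hnup
      have hscop : Nat.Coprime s nu := by
        have : Nat.gcd nu q.den = Nat.gcd s nu := Nat.gcd_rec nu q.den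
        unfold Nat.Coprime at *
        omega
      set r : ℚ := (s : ℚ) / (nu : ℚ) with hr
      have hrnum : r.num = (s : ℤ) := by
        rw [hr]
        have : ((s:ℤ):ℚ) / ((nu:ℤ):ℚ) = (s : ℚ) / (nu : ℚ) := by push_cast; ring
        rw [← this]
        exact Rat.num_div_eq_of_coprime (by exact_mod_cast hnup) (by simpa using hscop)
      have hr0 : 0 < r := by
        rw [hr]
        have h1 : (0:ℚ) < (s:ℚ) := by exact_mod_cast Nat.pos_of_ne_zero hs0
        have h2 : (0:ℚ) < (nu:ℚ) := by exact_mod_cast hnup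
        positivity
      have hr1 : r < 1 := by
        rw [hr, div_lt_one (by exact_mod_cast hnup)]
        exact_mod_cast hslt
      have hrn : r.num.toNat < n := by
        rw [hrnum]
        simp only [Int.toNat_natCast]
        omega
      obtain ⟨l', hl'⟩ := ih r.num.toNat hrn r le_rfl hr0 hr1
      have hl'ne : l' ≠ [] := by
        intro hcon
        rw [hcon] at hl'
        have : cfValQ [] = r := hl'.2.2
        simp [cfValQ] at this
        rw [← this] at hr0
        linarith
      have ha1 : 1 ≤ a := (Nat.one_le_div_iff hnup).mpr hlt.le
      refine ⟨a :: l', ⟨?_, ?_, ?_⟩⟩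
      · intro x hx
        rcases List.mem_cons.mp hx with h | h
        · omega
        · exact hl'.1 x h
      · intro x hx
        apply hl'.2.1
        cases l' with
        | nil => exact absurd rfl hl'ne
        | cons b m => rwa [List.getLast?_cons_cons] at hx
      · simp only [cfValQ]
        rw [hl'.2.2, hr, hqeq]
        have hnuQ : ((nu:ℚ)) ≠ 0 := by exact_mod_cast hnup.ne'
        have hdenQ : ((q.den:ℚ)) ≠ 0 := by exact_mod_cast hden.ne'
        have hd : ((q.den : ℚ)) = (nu : ℚ) * (a : ℚ) + (s : ℚ) := by exact_mod_cast hdiv.symm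
        rw [hd]
        have e : (a:ℚ) + (s:ℚ)/(nu:ℚ) = ((nu:ℚ)*(a:ℚ) + (s:ℚ))/(nu:ℚ) := by
          field_simp
        rw [e, one_div_div]

lemma exists_isCF (q : ℚ) (h0 : 0 < q) (h1 : q < 1) : ∃ l, IsCF q l :=
  exists_isCF_aux q.num.toNat q le_rfl h0 h1

lemma cfList_isCF {q : ℚ} (h : ∃ l, IsCF q l) : IsCF q (cfList q) := by
  rw [cfList, dif_pos h]
  exact h.choose_spec

lemma cfList_eq {q : ℚ} {l : List ℕ} (h : IsCF q l) : cfList q = l :=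
  isCF_unique (cfList_isCF ⟨l, h⟩) h

lemma flipList_eq {l : List ℕ} {c : ℕ} {rest : List ℕ}
    (h : (incHead l.tail).reverse = c :: rest) :
    flipList l = 1 :: (c - 1) :: rest := by
  rw [flipList, h]

lemma cfValQ_one_cons (b : ℕ) (t : List ℕ) (hb : 1 ≤ b) (hv : 0 ≤ cfValQ t) :
    cfValQ (1 :: b :: t) = 1 - cfValQ ((b + 1) :: t) := by
  simp only [cfValQ]
  have hbQ : (1:ℚ) ≤ (b:ℚ) := by exact_mod_cast hb
  have h1 : (0:ℚ) < (b:ℚ) + cfValQ t := by linarith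
  push_cast
  have h2 : (0:ℚ) < (b:ℚ) + 1 + cfValQ t := by linarith
  field_simp
  ring

lemma cop_sub {x N : ℕ} (h : x ≤ N) (hc : Nat.Coprime x N) : Nat.Coprime (N - x) N := by
  have h1 : Nat.gcd (N - x) N ∣ x := by
    have := Nat.dvd_sub (Nat.gcd_dvd_right (N - x) N) (Nat.gcd_dvd_left (N - x) N)
    rwa [Nat.sub_sub_self h] at this
  have h2 : Nat.gcd (N - x) N ∣ Nat.gcd x N :=
    Nat.dvd_gcd h1 (Nat.gcd_dvd_right (N - x) N)
  rw [hc.gcd_eq_one] at h2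
  exact Nat.dvd_one.mp h2

lemma mem_Zstar_iff {N a : ℕ} : a ∈ Zstar N ↔ (1 ≤ a ∧ a ≤ N ∧ Nat.Coprime a N) := by
  simp only [Zstar, Finset.mem_filter, Finset.mem_Icc]
  tauto

lemma main_step {N a : ℕ} (hN : 3 ≤ N) (haZ : a ∈ Zstar N) (h2a : N < 2 * a) :
    ∃ b : ℕ, b ∈ Zstar N ∧ N < 2 * b ∧
      ((b : ℚ) / N = cfValQ (flipList (cfList ((a : ℚ) / N)))) ∧
      starMap' N a = b ∧ starMap' N b = a := by
  obtain ⟨ha1, haN, hacop⟩ := mem_Zstar_iff.mp haZ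
  have hNQ : (0:ℚ) < (N:ℚ) := by exact_mod_cast (by omega : 0 < N)
  have haltN : a < N := by
    rcases Nat.lt_or_ge a N with h | h
    · exact h
    · exfalso
      have : a = N := le_antisymm haN h
      subst this
      rw [Nat.Coprime, Nat.gcd_self] at hacop
      omega
  set q : ℚ := (a : ℚ) / N with hqdef
  have hq0 : 0 < q := by
    have : (0:ℚ) < (a:ℚ) := by exact_mod_cast (by omega : 0 < a)
    positivity
  have hq1 : q < 1 := by
    rw [hqdef, div_lt_one hNQ]
    exact_mod_cast haltN
  have hqh : 1/2 < q := by
    rw [hqdef, div_lt_div_iff₀ (by norm_num) hNQ]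
    have : (N:ℚ) < 2 * a := by exact_mod_cast h2a
    linarith
  have hex := exists_isCF q hq0 hq1
  set l := cfList q with hldef
  have hl : IsCF q l := cfList_isCF hex
  have hlval : cfValQ l = q := hl.2.2
  -- decompose l = 1 :: a2 :: t
  obtain ⟨a1, m, hl1⟩ : ∃ a1 m, l = a1 :: m := by
    cases hl0 : l with
    | nil =>
      exfalso
      rw [hl0] at hlval
      simp [cfValQ] at hlval
      rw [← hlval] at hq0
      linarith
    | cons x xs => exact ⟨x, xs, rfl⟩
  have hm1 : ∀ x ∈ m, 1 ≤ x := fun x hx => hl.1 x (by rw [hl1]; simp [hx])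
  have hv0 := (cfValQ_nonneg_le_one m hm1).1
  have ha1Q : (1:ℚ) ≤ (a1:ℚ) := by
    exact_mod_cast hl.1 a1 (by rw [hl1]; simp)
  have hx0 : (0:ℚ) < (a1:ℚ) + cfValQ m := by linarith
  have hqval : 1 / ((a1:ℚ) + cfValQ m) = q := by
    rw [← hlval, hl1]; rfl
  have ha11 : a1 = 1 := by
    have hmul : q * ((a1:ℚ) + cfValQ m) = 1 := by
      rw [← hqval]; field_simp
    have hlt2 : (a1:ℚ) + cfValQ m < 2 := by nlinarith
    have : (a1:ℚ) < 2 := by linarith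
    have h2' : a1 < 2 := by exact_mod_cast this
    have h1' : 1 ≤ a1 := hl.1 a1 (by rw [hl1]; simp)
    omega
  obtain ⟨a2, t, hmt⟩ : ∃ a2 t, m = a2 :: t := by
    cases hm0 : m with
    | nil =>
      exfalso
      have hlast : l.getLast? = some a1 := by rw [hl1, hm0]; simp
      have := hl.2.1 a1 hlast
      omega
    | cons x xs => exact ⟨x, xs, rfl⟩
  have hl1' : l = 1 :: a2 :: t := by rw [hl1, ha11, hmt]
  have ha2 : 1 ≤ a2 := hm1 a2 (by rw [hmt]; simp)
  have ht1 : ∀ x ∈ t, 1 ≤ x := fun x hx => hm1 x (by rw [hmt]; simp [hx])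
  have htv0 := (cfValQ_nonneg_le_one t ht1).1
  set M : List ℕ := (a2 + 1) :: t with hMdef
  have hM1 : ∀ x ∈ M, 1 ≤ x := by
    intro x hx
    rw [hMdef] at hx
    rcases List.mem_cons.mp hx with h | h
    · omega
    · exact ht1 x h
  have hM2 : ∀ x, M.getLast? = some x → 2 ≤ x := by
    intro x hx
    cases ht0 : t with
    | nil =>
      rw [hMdef, ht0] at hx
      simp at hx
      omega
    | cons d t2 =>
      rw [hMdef, ht0, List.getLast?_cons_cons] at hx
      have h1 := last_tail (hl1' ▸ hl.2.1)
      have h2 := last_tail h1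
      rw [ht0] at h2
      exact h2 x hx
  have hMval : cfValQ M = 1 - q := by
    have h1 := cfValQ_one_cons a2 t ha2 htv0
    have h2 : cfValQ (1 :: a2 :: t) = q := by rw [← hl1']; exact hlval
    rw [hMdef]
    linarith
  -- denominators
  have hNacop : Nat.Coprime (N - a) N := cop_sub haltN.le hacop
  have hsubQ : ((N - a : ℕ):ℚ) = (N:ℚ) - (a:ℚ) := by
    push_cast [Nat.cast_sub haltN.le]; ring
  have hMvalQ : cfValQ M = ((N - a : ℕ):ℚ) / (N:ℚ) := by
    rw [hMval, hsubQ, hqdef]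
    field_simp
  have hMden : (cont M).2 = N := by
    have h1 := (cfValQ_num_den M hM1).2
    have h2 : (cfValQ M).den = N := by
      rw [hMvalQ]
      have h3 : ((((N - a : ℕ):ℤ):ℚ) / ((N:ℤ):ℚ)).den = (N:ℤ) :=
        Rat.den_div_eq_of_coprime (by exact_mod_cast (by omega : 0 < N))
          (by simpa using hNacop)
      have h4 : ((((N - a : ℕ):ℤ):ℚ) / ((N:ℤ):ℚ)) = ((N - a : ℕ):ℚ) / (N:ℚ) := by
        push_cast; ring
      rw [h4] at h3
      exact_mod_cast h3
    omega
  -- reversed list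
  set R : List ℕ := M.reverse with hRdef
  have hRne : R ≠ [] := by
    rw [hRdef, hMdef]
    simp
  have hR1 : ∀ x ∈ R, 1 ≤ x := by
    intro x hx
    exact hM1 x (List.mem_reverse.mp hx)
  have hRden : (cont R).2 = N := by
    rw [hRdef, cont_den_reverse]; exact hMden
  set p' : ℕ := (cont R).1 with hp'def
  have hp'cop : Nat.Coprime p' N := by
    have := cont_coprime R
    rwa [hRden] at this
  have hRval : cfValQ R = (p' : ℚ) / (N : ℚ) := by
    rw [cfValQ_eq_div R hR1, hRden]
  obtain ⟨c, rest', hR⟩ : ∃ c rest', R = c :: rest' := by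
    cases hR0 : R with
    | nil => exact absurd hR0 hRne
    | cons x xs => exact ⟨x, xs, rfl⟩
  have hMform : M = rest'.reverse ++ [c] := by
    have : R.reverse = M := by rw [hRdef, List.reverse_reverse]
    rw [← this, hR, List.reverse_cons]
  have hlastM : M.getLast? = some c := by
    rw [hMform, List.getLast?_concat]
  have hc2 : 2 ≤ c := hM2 c hlastM
  have hrest1 : ∀ x ∈ rest', 1 ≤ x := fun x hx => hR1 x (by rw [hR]; simp [hx])
  have hrestv0 := (cfValQ_nonneg_le_one rest' hrest1).1
  -- bounds on p'
  have hp'pos : 0 < p' := by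
    have hpos : 0 < cfValQ R := by
      rw [hR]
      exact cfValQ_pos c rest' (hR ▸ hR1)
    rw [hRval] at hpos
    by_contra hcon
    have : p' = 0 := by omega
    rw [this] at hpos
    simp at hpos
  have h2p' : 2 * p' < N := by
    have hle : cfValQ R ≤ 1/2 := by
      rw [hR]
      simp only [cfValQ]
      have hcQ : (2:ℚ) ≤ (c:ℚ) := by exact_mod_cast hc2
      have hd : (0:ℚ) < (c:ℚ) + cfValQ rest' := by linarith
      rw [div_le_div_iff₀ hd (by norm_num)]
      linarith
    rw [hRval, div_le_div_iff₀ hNQ (by norm_num)] at hle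
    have h2le : 2 * p' ≤ N := by exact_mod_cast (by linarith : (2:ℚ) * (p':ℚ) ≤ (N:ℚ))
    rcases Nat.lt_or_ge (2 * p') N with h | h
    · exact h
    · exfalso
      have heq : 2 * p' = N := by omega
      have hdvd : p' ∣ N := ⟨2, by omega⟩
      have := Nat.dvd_gcd (dvd_refl p') hdvd
      rw [hp'cop.gcd_eq_one] at this
      have : p' = 1 := Nat.dvd_one.mp this
      omega
  set b : ℕ := N - p' with hbdef
  have hbZ : b ∈ Zstar N := by
    rw [mem_Zstar_iff]
    refine ⟨by omega, by omega, cop_sub (by omega) hp'cop⟩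
  have hb2 : N < 2 * b := by omega
  -- the flipped list
  have hscrut : (incHead l.tail).reverse = c :: rest' := by
    rw [hl1']
    show (incHead (a2 :: t)).reverse = c :: rest'
    rw [show incHead (a2 :: t) = (a2 + 1) :: t from rfl, ← hMdef, ← hRdef]
    exact hR
  have hflip : flipList l = 1 :: (c - 1) :: rest' := flipList_eq hscrut
  have hbQ : ((b:ℕ):ℚ) = (N:ℚ) - (p':ℚ) := by
    rw [hbdef]
    push_cast [Nat.cast_sub (by omega : p' ≤ N)]
    ring
  have hflipval : cfValQ (flipList l) = (b : ℚ) / N := by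
    rw [hflip]
    have h1 := cfValQ_one_cons (c - 1) rest' (by omega) hrestv0
    rw [show c - 1 + 1 = c from by omega] at h1
    rw [h1, ← hR, hRval, hbQ]
    field_simp
  have hflipIsCF : IsCF ((b:ℚ)/N) (flipList l) := by
    refine ⟨?_, ?_, by rw [hflipval]⟩
    · intro x hx
      rw [hflip] at hx
      rcases List.mem_cons.mp hx with h | h
      · omega
      · rcases List.mem_cons.mp h with h' | h'
        · omega
        · exact hrest1 x h'
    · intro x hx
      rw [hflip] at hx
      cases hrest0 : rest' with
      | nil =>
        rw [hrest0] at hx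
        simp at hx
        -- x = c - 1 ; need 2 ≤ c - 1, i.e. c ≥ 3
        have ht0 : t = [] ∧ a2 + 1 = c := by
          rw [hrest0] at hMform
          simp only [List.reverse_nil, List.nil_append] at hMform
          rw [hMdef] at hMform
          injection hMform with h1 h2
          exact ⟨h2, h1⟩
        have ha2last : l.getLast? = some a2 := by
          rw [hl1', ht0.1]
          simp
        have := hl.2.1 a2 ha2last
        omega
      | cons d rest2 =>
        rw [hrest0, List.getLast?_cons_cons, List.getLast?_cons_cons] at hx
        -- x = getLast of rest' = head of M = a2 + 1
        have hgl : (d :: rest2).getLast? = M.head? := by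
          rw [← hrest0]
          have : rest'.getLast? = rest'.reverse.head? := by
            rw [List.head?_reverse]
          rw [this, hMform]
          rw [List.head?_append_of_ne_nil]
          simp [hrest0]
        rw [hgl, hMdef] at hx
        simp at hx
        omega
  have hcfb : cfList ((b:ℚ)/N) = flipList l := cfList_eq hflipIsCF
  have hstar : starMap' N a = b := by
    rw [starMap', ← hqdef, ← hldef, hflipval]
    rw [mul_div_cancel₀ _ hNQ.ne']
    simp
  have hflipflip : flipList (flipList l) = l := by
    have hscrut2 : (incHead (flipList l).tail).reverse = (a2 + 1) :: t := by
      rw [hflip]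
      show (incHead ((c-1) :: rest')).reverse = (a2 + 1) :: t
      rw [show incHead ((c-1) :: rest') = (c - 1 + 1) :: rest' from rfl]
      rw [show c - 1 + 1 = c from by omega, ← hR, hRdef, List.reverse_reverse]
    have := flipList_eq hscrut2
    rw [this, hl1']
    simp
  have hinv : starMap' N b = a := by
    rw [starMap', hcfb, hflipflip, hlval, hqdef]
    rw [mul_div_cancel₀ _ hNQ.ne']
    simp
  exact ⟨b, hbZ, hb2, hflipval.symm, hstar, hinv⟩

end CFAux

theorem stmt19 (N : ℕ) (hN : 3 ≤ N) :
    (∀ a, a ∈ Zstar N → N < 2 * a →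
        ((starMap' N a : ℚ) / N = cfValQ (flipList (cfList ((a : ℚ) / N))))) ∧
    Set.BijOn (starMap' N) {a | a ∈ Zstar N ∧ N < 2 * a}
      {a | a ∈ Zstar N ∧ N < 2 * a} := by
  constructor
  · intro a haZ h2a
    obtain ⟨b, hbZ, hb2, hbval, hstar, hinv⟩ := CFAux.main_step hN haZ h2a
    rw [hstar]
    exact hbval
  · have hmaps : Set.MapsTo (starMap' N) {a | a ∈ Zstar N ∧ N < 2 * a}
        {a | a ∈ Zstar N ∧ N < 2 * a} := by
      rintro a ⟨h1, h2⟩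
      obtain ⟨b, hbZ, hb2, _, hstar, _⟩ := CFAux.main_step hN h1 h2
      rw [Set.mem_setOf_eq, hstar]
      exact ⟨hbZ, hb2⟩
    have hinv : ∀ a ∈ {a | a ∈ Zstar N ∧ N < 2 * a},
        starMap' N (starMap' N a) = a := by
      rintro a ⟨h1, h2⟩
      obtain ⟨b, _, _, _, hstar, hinv⟩ := CFAux.main_step hN h1 h2
      rw [hstar, hinv]
    exact Set.InvOn.bijOn ⟨hinv, hinv⟩ hmaps hmaps
end
end
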